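/- Every step sequence (i.e., every ~-equivalence class of coherent words of starters and terminators) contains exactly one sparse representative. -/

import Mathlib

set_option maxHeartbeats 1000000

universe u v w

/-- An ipomset over event universe `E` and alphabet `A`:
a finite set of events with a precedence order `lt`, an event order `evord`,
source and target sets, and a labeling. -/
structure Ipomset (E : Type u) (A : Type v) where
  events : Finset E
  lt : E → E → Prop
  evord : E → E → Prop
  src : Finset E
  tgt : Finset E
  lab : E → A
  lt_mem : ∀ {x y}, lt x y → x ∈ events ∧ y ∈ events
  evord_mem : ∀ {x y}, evord x y → x ∈ events ∧ y ∈ events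
  lt_irrefl : ∀ x, ¬ lt x x
  lt_trans : ∀ {x y z}, lt x y → lt y z → lt x z
  evord_irrefl : ∀ x, ¬ evord x x
  evord_trans : ∀ {x y z}, evord x y → evord y z → evord x z
  order_total : ∀ {x y}, x ∈ events → y ∈ events → x ≠ y →
      lt x y ∨ lt y x ∨ evord x y ∨ evord y x
  src_sub : src ⊆ events
  tgt_sub : tgt ⊆ events
  src_min : ∀ {x y}, x ∈ src → ¬ lt y x
  tgt_max : ∀ {x y}, x ∈ tgt → ¬ lt x y

namespace Ipomset

variable {E : Type u} {A : Type v}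

/-- An ipomset is interval if its precedence order admits an interval representation. -/
def Interval (P : Ipomset E A) : Prop :=
  ∃ b e : E → ℝ, (∀ x ∈ P.events, b x ≤ e x) ∧
    ∀ x ∈ P.events, ∀ y ∈ P.events, (P.lt x y ↔ e x < b y)

/-- Discrete: empty precedence order. -/
def Discrete (P : Ipomset E A) : Prop := ∀ x y, ¬ P.lt x y

/-- A starter is a discrete ipomset with `tgt = events`. -/
def Starter (P : Ipomset E A) : Prop := P.Discrete ∧ P.tgt = P.events

/-- A terminator is a discrete ipomset with `src = events`. -/
def Terminator (P : Ipomset E A) : Prop := P.Discrete ∧ P.src = P.events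

/-- An identity is a discrete ipomset with `src = tgt = events`. -/
def IsIdentity (P : Ipomset E A) : Prop :=
  P.Discrete ∧ P.src = P.events ∧ P.tgt = P.events

end Ipomset

/-- A conclist: a finite set with a strict total order (the event order) and labeling. -/
structure Conclist (E : Type u) (A : Type v) where
  events : Finset E
  evord : E → E → Prop
  lab : E → Option A
  evord_mem : ∀ {x y}, evord x y → x ∈ events ∧ y ∈ events
  evord_irrefl : ∀ x, ¬ evord x x
  evord_trans : ∀ {x y z}, evord x y → evord y z → evord x z
  evord_total : ∀ {x y}, x ∈ events → y ∈ events → x ≠ y → evord x y ∨ evord y x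

variable {E : Type u} {A : Type v}

/-- The source interface of an ipomset: the conclist on its source set. -/
def Ipomset.srcIface [DecidableEq E] (P : Ipomset E A) : Conclist E A where
  events := P.src
  evord x y := x ∈ P.src ∧ y ∈ P.src ∧ P.evord x y
  lab x := if x ∈ P.src then some (P.lab x) else none
  evord_mem h := ⟨h.1, h.2.1⟩
  evord_irrefl x h := P.evord_irrefl x h.2.2
  evord_trans h1 h2 := ⟨h1.1, h2.2.1, P.evord_trans h1.2.2 h2.2.2⟩
  evord_total {x y} hx hy hxy := by
    rcases P.order_total (P.src_sub hx) (P.src_sub hy) hxy with h | h | h | h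
    · exact absurd h (P.src_min hy)
    · exact absurd h (P.src_min hx)
    · exact Or.inl ⟨hx, hy, h⟩
    · exact Or.inr ⟨hy, hx, h⟩

/-- The target interface of an ipomset: the conclist on its target set. -/
def Ipomset.tgtIface [DecidableEq E] (P : Ipomset E A) : Conclist E A where
  events := P.tgt
  evord x y := x ∈ P.tgt ∧ y ∈ P.tgt ∧ P.evord x y
  lab x := if x ∈ P.tgt then some (P.lab x) else none
  evord_mem h := ⟨h.1, h.2.1⟩
  evord_irrefl x h := P.evord_irrefl x h.2.2
  evord_trans h1 h2 := ⟨h1.1, h2.2.1, P.evord_trans h1.2.2 h2.2.2⟩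
  evord_total {x y} hx hy hxy := by
    rcases P.order_total (P.tgt_sub hx) (P.tgt_sub hy) hxy with h | h | h | h
    · exact absurd h (P.tgt_max hx)
    · exact absurd h (P.tgt_max hy)
    · exact Or.inl ⟨hx, hy, h⟩
    · exact Or.inr ⟨hy, hx, h⟩

/-- `f` is an isomorphism of ipomsets from `P` to `Q`. -/
structure IsIpoIso (P Q : Ipomset E A) (f : E → E) : Prop where
  maps : ∀ x ∈ P.events, f x ∈ Q.events
  inj : ∀ x ∈ P.events, ∀ y ∈ P.events, f x = f y → x = y
  surj : ∀ y ∈ Q.events, ∃ x ∈ P.events, f x = y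
  src_iff : ∀ x ∈ P.events, (x ∈ P.src ↔ f x ∈ Q.src)
  tgt_iff : ∀ x ∈ P.events, (x ∈ P.tgt ↔ f x ∈ Q.tgt)
  lab_eq : ∀ x ∈ P.events, Q.lab (f x) = P.lab x
  lt_iff : ∀ x ∈ P.events, ∀ y ∈ P.events, (Q.lt (f x) (f y) ↔ P.lt x y)
  evord_iff : ∀ x ∈ P.events, ∀ y ∈ P.events, ¬ P.lt x y → ¬ P.lt y x →
      (P.evord x y ↔ Q.evord (f x) (f y))

/-- `P ≅ Q`: there is an isomorphism of ipomsets from `P` to `Q`. -/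
def IpoIso (P Q : Ipomset E A) : Prop := ∃ f, IsIpoIso P Q f

/-- `f` is a subsumption of ipomsets from `P` to `Q`. -/
structure IsSubsumption (P Q : Ipomset E A) (f : E → E) : Prop where
  maps : ∀ x ∈ P.events, f x ∈ Q.events
  inj : ∀ x ∈ P.events, ∀ y ∈ P.events, f x = f y → x = y
  surj : ∀ y ∈ Q.events, ∃ x ∈ P.events, f x = y
  src_iff : ∀ x ∈ P.events, (x ∈ P.src ↔ f x ∈ Q.src)
  tgt_iff : ∀ x ∈ P.events, (x ∈ P.tgt ↔ f x ∈ Q.tgt)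
  lab_eq : ∀ x ∈ P.events, Q.lab (f x) = P.lab x
  lt_imp : ∀ x ∈ P.events, ∀ y ∈ P.events, Q.lt (f x) (f y) → P.lt x y
  evord_imp : ∀ x ∈ P.events, ∀ y ∈ P.events, ¬ P.lt x y → ¬ P.lt y x →
      P.evord x y → Q.evord (f x) (f y)

/-- `P ⊑ Q`: there is a subsumption from `P` to `Q`. -/
def Subsumes (P Q : Ipomset E A) : Prop := ∃ f, IsSubsumption P Q f

/-- `P ⊏ Q`: `P ⊑ Q` and `P` and `Q` are not isomorphic. -/
def StrictSubsumes (P Q : Ipomset E A) : Prop := Subsumes P Q ∧ ¬ IpoIso P Q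

/-- `f` is an isomorphism of conclists from `U` to `V`. -/
structure IsClIso (U V : Conclist E A) (f : E → E) : Prop where
  maps : ∀ x ∈ U.events, f x ∈ V.events
  inj : ∀ x ∈ U.events, ∀ y ∈ U.events, f x = f y → x = y
  surj : ∀ y ∈ V.events, ∃ x ∈ U.events, f x = y
  lab_eq : ∀ x ∈ U.events, V.lab (f x) = U.lab x
  evord_iff : ∀ x ∈ U.events, ∀ y ∈ U.events, (U.evord x y ↔ V.evord (f x) (f y))

/-- `U ≅ V` for conclists. -/
def ClIso (U V : Conclist E A) : Prop := ∃ f, IsClIso U V f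

/-- `P` and `Q` are composable representatives: the target interface of `P` coincides
with the source interface of `Q` and is exactly the overlap of the event sets. -/
def Composable [DecidableEq E] (P Q : Ipomset E A) : Prop :=
  P.tgtIface = Q.srcIface ∧ P.events ∩ Q.events = P.tgt

/-- One step of the glued precedence order. -/
def glueStep (P Q : Ipomset E A) (x y : E) : Prop :=
  P.lt x y ∨ Q.lt x y ∨
    (x ∈ P.events ∧ x ∉ P.tgt ∧ y ∈ Q.events ∧ y ∉ Q.src)

/-- The glued precedence order: transitive closure. -/
def glueLt (P Q : Ipomset E A) : E → E → Prop :=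
  Relation.TransGen (glueStep P Q)

/-- The glued event order: the union of the two event orders. -/
def glueEvord (P Q : Ipomset E A) (x y : E) : Prop :=
  P.evord x y ∨ Q.evord x y

/-- `R` is the gluing of the composable representatives `P` and `Q`. -/
def IsGlueOf [DecidableEq E] (P Q R : Ipomset E A) : Prop :=
  Composable P Q ∧
  R.events = P.events ∪ Q.events ∧
  (∀ x y, R.lt x y ↔ glueLt P Q x y) ∧
  (∀ x y, R.evord x y ↔ glueEvord P Q x y) ∧
  R.src = P.src ∧ R.tgt = Q.tgt ∧
  (∀ x ∈ P.events, R.lab x = P.lab x) ∧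
  (∀ x ∈ Q.events, R.lab x = Q.lab x)

/-- `R ≅ P * Q`: up to isomorphism, `R` is the gluing of `P` and `Q`. -/
def IsGluing [DecidableEq E] (P Q R : Ipomset E A) : Prop :=
  ∃ P' Q' R', IpoIso P P' ∧ IpoIso Q Q' ∧ IpoIso R R' ∧ IsGlueOf P' Q' R'

/-- A letter of a step sequence: a starter or a terminator. -/
def StepLetter (P : Ipomset E A) : Prop := P.Starter ∨ P.Terminator

/-- A word of starters and terminators is coherent if consecutive interfaces match
(as isomorphism classes of conclists). -/
def Coherent [DecidableEq E] (w : List (Ipomset E A)) : Prop :=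
  (∀ P ∈ w, StepLetter P) ∧
  w.Chain' (fun P Q => ClIso P.tgtIface Q.srcIface)

/-- The congruence `~` on coherent words: generated by composing two subsequent
starters or two subsequent terminators, removing/inserting identities, and
replacing letters by isomorphic ones. -/
inductive StepEquiv {E : Type u} {A : Type v} [DecidableEq E] :
    List (Ipomset E A) → List (Ipomset E A) → Prop
  | glue (u v : List (Ipomset E A)) (P Q R : Ipomset E A) :
      Coherent (u ++ P :: Q :: v) →
      ((P.Starter ∧ Q.Starter) ∨ (P.Terminator ∧ Q.Terminator)) →
      IsGluing P Q R →
      StepEquiv (u ++ P :: Q :: v) (u ++ R :: v)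
  | ident (u v : List (Ipomset E A)) (P : Ipomset E A) :
      Coherent (u ++ P :: v) → P.IsIdentity → u ++ v ≠ [] →
      StepEquiv (u ++ P :: v) (u ++ v)
  | iso (u v : List (Ipomset E A)) (P Q : Ipomset E A) :
      Coherent (u ++ P :: v) → IpoIso P Q →
      StepEquiv (u ++ P :: v) (u ++ Q :: v)
  | refl (w : List (Ipomset E A)) : StepEquiv w w
  | symm {w₁ w₂ : List (Ipomset E A)} : StepEquiv w₁ w₂ → StepEquiv w₂ w₁
  | trans {w₁ w₂ w₃ : List (Ipomset E A)} :
      StepEquiv w₁ w₂ → StepEquiv w₂ w₃ → StepEquiv w₁ w₃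

/-- `R` is (up to isomorphism) the gluing `P₁ * ⋯ * Pₙ` of the word `w = P₁ ⋯ Pₙ`. -/
inductive GlueWord {E : Type u} {A : Type v} [DecidableEq E] :
    List (Ipomset E A) → Ipomset E A → Prop
  | single (P : Ipomset E A) : GlueWord [P] P
  | cons (P : Ipomset E A) (w : List (Ipomset E A)) (R S : Ipomset E A) :
      GlueWord w R → IsGluing P R S → GlueWord (P :: w) S

/-- The discrete ipomset on sub-conclist `V` of the discrete ipomset `W`,
with sources `S` and targets `T`. -/
def letterOf [DecidableEq E] (W : Ipomset E A) (hW : W.Discrete)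
    (V S T : Finset E) : Ipomset E A where
  events := V ∩ W.events
  lt _ _ := False
  evord x y := x ∈ V ∩ W.events ∧ y ∈ V ∩ W.events ∧ W.evord x y
  src := S ∩ (V ∩ W.events)
  tgt := T ∩ (V ∩ W.events)
  lab := W.lab
  lt_mem h := h.elim
  evord_mem h := ⟨h.1, h.2.1⟩
  lt_irrefl _ h := h
  lt_trans h := h.elim
  evord_irrefl x h := W.evord_irrefl x h.2.2
  evord_trans h1 h2 := ⟨h1.1, h2.2.1, W.evord_trans h1.2.2 h2.2.2⟩
  order_total {x y} hx hy hxy := by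
    rcases W.order_total (Finset.mem_inter.mp hx).2 (Finset.mem_inter.mp hy).2 hxy
      with h | h | h | h
    · exact absurd h (hW _ _)
    · exact absurd h (hW _ _)
    · exact Or.inr (Or.inr (Or.inl ⟨hx, hy, h⟩))
    · exact Or.inr (Or.inr (Or.inr ⟨hy, hx, h⟩))
  src_sub := Finset.inter_subset_right
  tgt_sub := Finset.inter_subset_right
  src_min _ h := h
  tgt_max _ h := h

/-- `V↑B`: the starter on the conclist `V` (inside `W`) starting the events of `B`. -/
def upOn [DecidableEq E] (W : Ipomset E A) (hW : W.Discrete) (V B : Finset E) :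
    Ipomset E A :=
  letterOf W hW V (V \ B) V

/-- `V↓B`: the terminator on the conclist `V` (inside `W`) terminating the events of `B`. -/
def downOn [DecidableEq E] (W : Ipomset E A) (hW : W.Discrete) (V B : Finset E) :
    Ipomset E A :=
  letterOf W hW V V (V \ B)

/-- The transposition relation: `TranspAt w w'` holds iff `w' = τᵢ(w)` for some `i`. -/
inductive TranspAt {E : Type u} {A : Type v} [DecidableEq E] :
    List (Ipomset E A) → List (Ipomset E A) → Prop
  | ss (u v : List (Ipomset E A)) (W : Ipomset E A) (hW : W.Discrete)
      (Aa Bb : Finset E) (hA : Aa ⊆ W.events) (hB : Bb ⊆ W.events)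
      (hd : Disjoint Aa Bb) :
      TranspAt (u ++ upOn W hW (W.events \ Bb) Aa :: upOn W hW W.events Bb :: v)
               (u ++ upOn W hW (W.events \ Aa) Bb :: upOn W hW W.events Aa :: v)
  | tt (u v : List (Ipomset E A)) (W : Ipomset E A) (hW : W.Discrete)
      (Aa Bb : Finset E) (hA : Aa ⊆ W.events) (hB : Bb ⊆ W.events)
      (hd : Disjoint Aa Bb) :
      TranspAt (u ++ downOn W hW W.events Aa :: downOn W hW (W.events \ Aa) Bb :: v)
               (u ++ downOn W hW W.events Bb :: downOn W hW (W.events \ Bb) Aa :: v)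
  | st (u v : List (Ipomset E A)) (W : Ipomset E A) (hW : W.Discrete)
      (Aa Bb : Finset E) (hA : Aa ⊆ W.events) (hB : Bb ⊆ W.events)
      (hd : Disjoint Aa Bb) :
      TranspAt (u ++ upOn W hW W.events Aa :: downOn W hW W.events Bb :: v)
               (u ++ downOn W hW (W.events \ Aa) Bb :: upOn W hW (W.events \ Bb) Aa :: v)
  | ts (u v : List (Ipomset E A)) (W : Ipomset E A) (hW : W.Discrete)
      (Aa Bb : Finset E) (hA : Aa ⊆ W.events) (hB : Bb ⊆ W.events)
      (hd : Disjoint Aa Bb) :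
      TranspAt (u ++ downOn W hW (W.events \ Bb) Aa :: upOn W hW (W.events \ Aa) Bb :: v)
               (u ++ upOn W hW W.events Bb :: downOn W hW W.events Aa :: v)

/-- A word is dense if every letter starts or terminates exactly one event. -/
def DenseWord [DecidableEq E] (w : List (Ipomset E A)) : Prop :=
  ∀ P ∈ w, (P.Starter ∧ (P.events \ P.src).card = 1) ∨
    (P.Terminator ∧ (P.events \ P.tgt).card = 1)

/-- There is a chain of transpositions from `w₁` to `w₂` through dense coherent words
all satisfying `pred`. -/
def TranspChain [DecidableEq E] (pred : List (Ipomset E A) → Prop)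
    (w₁ w₂ : List (Ipomset E A)) : Prop :=
  ∃ us : List (List (Ipomset E A)),
    us.head? = some w₁ ∧ us.getLast? = some w₂ ∧
    us.Chain' TranspAt ∧ ∀ u ∈ us, DenseWord u ∧ Coherent u ∧ pred u

/-- A word is sparse if it is a single identity, or its letters are non-identity
starters and terminators which strictly alternate. -/
def SparseWord [DecidableEq E] (w : List (Ipomset E A)) : Prop :=
  (∃ P, w = [P] ∧ P.IsIdentity) ∨
  ((∀ P ∈ w, StepLetter P ∧ ¬ P.IsIdentity) ∧
    w.Chain' (fun P Q => (P.Starter ∧ Q.Terminator) ∨ (P.Terminator ∧ Q.Starter)))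

/-- `w` is THE sparse step decomposition of `P` (up to the chosen representatives). -/
def SparseDecomp [DecidableEq E] (P : Ipomset E A) (w : List (Ipomset E A)) : Prop :=
  SparseWord w ∧ Coherent w ∧ ∃ R, GlueWord w R ∧ IpoIso R P

/-- The transposition exchanging a starter followed by a terminator
(third case of the definition of transpositions): `TranspST w tw` iff `tw = τᵢ(w)`
where the `i`-th factor of `w` is `U↑A · U↓B`. -/
def TranspST [DecidableEq E] (w tw : List (Ipomset E A)) : Prop :=
  ∃ (u v : List (Ipomset E A)) (W : Ipomset E A) (hW : W.Discrete)
    (Aa Bb : Finset E), Aa ⊆ W.events ∧ Bb ⊆ W.events ∧ Disjoint Aa Bb ∧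
    w = u ++ upOn W hW W.events Aa :: downOn W hW W.events Bb :: v ∧
    tw = u ++ downOn W hW (W.events \ Aa) Bb :: upOn W hW (W.events \ Bb) Aa :: v

/-- `w₂ <ₑ w₁` on step sequences: some representative of `w₂` is obtained from a
representative of `w₁` by a starter-terminator transposition. -/
def LtE [DecidableEq E] (w₂ w₁ : List (Ipomset E A)) : Prop :=
  ∃ w₁' w₂', StepEquiv w₁ w₁' ∧ StepEquiv w₂ w₂' ∧ TranspST w₁' w₂'

/-- `≤`: the reflexive-transitive closure of `<ₑ` on step sequences. -/
def StepLe [DecidableEq E] (w₁ w₂ : List (Ipomset E A)) : Prop :=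
  Relation.ReflTransGen (fun x y => LtE x y ∨ StepEquiv x y) w₁ w₂

/-- A higher-dimensional automaton: cells labelled by conclists (identity ipomsets),
face maps satisfying the precubical identities, start and accept cells. -/
structure HDA (X : Type w) (E : Type u) (A : Type v) [DecidableEq E] where
  ev : X → Ipomset E A
  ev_id : ∀ q, (ev q).IsIdentity
  face : Bool → Finset E → X → X
  face_ev : ∀ (b : Bool) (B : Finset E) (q : X), B ⊆ (ev q).events →
    ev (face b B q) =
      letterOf (ev q) (ev_id q).1 ((ev q).events \ B) ((ev q).events \ B)
        ((ev q).events \ B)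
  face_comm : ∀ (b c : Bool) (B C : Finset E) (q : X), Disjoint B C →
    B ⊆ (ev q).events → C ⊆ (ev q).events →
    face b B (face c C q) = face c C (face b B q)
  start : Set X
  accept : Set X

/-- Paths in an HDA, together with their event words (interleaving identities). -/
inductive HPath {X : Type w} {E : Type u} {A : Type v} [DecidableEq E]
    (H : HDA X E A) : X → X → List (Ipomset E A) → Prop
  | nil (q : X) : HPath H q q [H.ev q]
  | up (q p r : X) (w : List (Ipomset E A)) (B : Finset E)
      (hB : B ⊆ (H.ev p).events) :
      q = H.face false B p → HPath H p r w →
      HPath H q r (upOn (H.ev p) (H.ev_id p).1 (H.ev p).events B :: w)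
  | down (p q r : X) (w : List (Ipomset E A)) (B : Finset E)
      (hB : B ⊆ (H.ev p).events) :
      q = H.face true B p → HPath H q r w →
      HPath H p r (downOn (H.ev p) (H.ev_id p).1 (H.ev p).events B :: w)

/-- The language of an HDA: event ipomsets of accepting paths, closed under iso. -/
def HLang {X : Type w} [DecidableEq E] (H : HDA X E A) : Set (Ipomset E A) :=
  {P | ∃ q r w R, q ∈ H.start ∧ r ∈ H.accept ∧ HPath H q r w ∧
    GlueWord w R ∧ IpoIso R P}

/-- An ST-automaton: states labelled by conclists (identity ipomsets), edges labelled
by starters and terminators consistently with the state labels. -/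
structure STAut (Q : Type w) (E : Type u) (A : Type v) [DecidableEq E] where
  lab : Q → Ipomset E A
  lab_id : ∀ q, (lab q).IsIdentity
  edge : Q → Ipomset E A → Q → Prop
  edge_st : ∀ {q P r}, edge q P r → StepLetter P
  edge_src : ∀ {q P r}, edge q P r → P.srcIface = (lab q).srcIface
  edge_tgt : ∀ {q P r}, edge q P r → P.tgtIface = (lab r).srcIface
  start : Set Q
  accept : Set Q

/-- Paths in an ST-automaton together with their labels
`id_{λ(q₀)} P₁ id_{λ(q₁)} ⋯ Pₙ id_{λ(qₙ)}`. -/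
inductive STPath {Q : Type w} {E : Type u} {A : Type v} [DecidableEq E]
    (S : STAut Q E A) : Q → Q → List (Ipomset E A) → Prop
  | nil (q : Q) : STPath S q q [S.lab q]
  | cons (q p r : Q) (P : Ipomset E A) (w : List (Ipomset E A)) :
      S.edge q P p → STPath S p r w → STPath S q r (S.lab q :: P :: w)

/-- The language of an ST-automaton: the `~`-classes of labels of accepting paths
(as a `~`-saturated set of words). -/
def STLang {Q : Type w} [DecidableEq E] (S : STAut Q E A) :
    Set (List (Ipomset E A)) :=
  {w | ∃ q r w', q ∈ S.start ∧ r ∈ S.accept ∧ STPath S q r w' ∧ StepEquiv w w'}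

/-- `S` is the ST-automaton `ST(X)` associated to the HDA `H`. -/
def IsSTof {X : Type w} [DecidableEq E] (H : HDA X E A) (S : STAut X E A) : Prop :=
  S.lab = H.ev ∧ S.start = H.start ∧ S.accept = H.accept ∧
  ∀ q P r, S.edge q P r ↔
    ((∃ B, ∃ _ : B ⊆ (H.ev r).events, q = H.face false B r ∧
        P = upOn (H.ev r) (H.ev_id r).1 (H.ev r).events B) ∨
     (∃ B, ∃ _ : B ⊆ (H.ev q).events, r = H.face true B q ∧
        P = downOn (H.ev q) (H.ev_id q).1 (H.ev q).events B))

/-- The image of a set of ipomsets under `Φ` (sparse step decomposition),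
as a `~`-saturated set of words. -/
def PhiImage [DecidableEq E] (L : Set (Ipomset E A)) : Set (List (Ipomset E A)) :=
  {w | ∃ P ∈ L, ∃ w', SparseDecomp P w' ∧ StepEquiv w w'}

/-- The image of a set of words under `Ψ` (gluing), as an iso-saturated set of ipomsets. -/
def PsiImage [DecidableEq E] (L : Set (List (Ipomset E A))) : Set (Ipomset E A) :=
  {P | ∃ w ∈ L, ∃ R, GlueWord w R ∧ IpoIso R P}

/-- `H` together with `ι` realizes the HDA `HD(S)` obtained from the ST-automaton `S`:
cells of `S` embed via `ι` compatibly with labels, start/accept cells, and each edge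
of `S` is realized by a face map of `H`. -/
def SimulatesST {Q : Type w} {X : Type w} [DecidableEq E]
    (S : STAut Q E A) (H : HDA X E A) (ι : Q → X) : Prop :=
  (∀ q, H.ev (ι q) = S.lab q) ∧
  (∀ q ∈ S.start, ι q ∈ H.start) ∧
  (∀ q ∈ S.accept, ι q ∈ H.accept) ∧
  ∀ q P r, S.edge q P r →
    ((∃ B, ∃ _ : B ⊆ (H.ev (ι r)).events, ι q = H.face false B (ι r) ∧
        P = upOn (H.ev (ι r)) (H.ev_id (ι r)).1 (H.ev (ι r)).events B) ∨
     (∃ B, ∃ _ : B ⊆ (H.ev (ι q)).events, ι r = H.face true B (ι q) ∧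
        P = downOn (H.ev (ι q)) (H.ev_id (ι q)).1 (H.ev (ι q)).events B))


namespace SparseAux

section Sorted
variable {E : Type u} {A : Type v} [DecidableEq E]

/-- `l` enumerates `s` in increasing `r`-order. -/
def SortedOf (r : E → E → Prop) (s : Finset E) (l : List E) : Prop :=
  l.toFinset = s ∧ l.Nodup ∧ l.Pairwise r

theorem exists_minimal' {r : E → E → Prop} (htr : ∀ x y z, r x y → r y z → r x z)
    (hirr : ∀ x, ¬ r x x) (s : Finset E) :
    s.Nonempty → ∃ m ∈ s, ∀ x ∈ s, ¬ r x m := by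
  classical
  induction s using Finset.induction_on with
  | empty => intro hs; simp at hs
  | @insert a s ha ih =>
    intro _
    rcases s.eq_empty_or_nonempty with rfl | hs'
    · exact ⟨a, by simp, by intro x hx; simp at hx; subst hx; exact hirr _⟩
    · obtain ⟨m, hm, hmin⟩ := ih hs'
      by_cases hr : r a m
      · refine ⟨a, by simp, ?_⟩
        intro x hx
        rcases Finset.mem_insert.1 hx with rfl | hx
        · exact hirr x
        · intro hxa; exact hmin x hx (htr _ _ _ hxa hr)
      · refine ⟨m, Finset.mem_insert_of_mem hm, ?_⟩
        intro x hx
        rcases Finset.mem_insert.1 hx with rfl | hx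
        · exact hr
        · exact hmin x hx

theorem exists_sortedOf {r : E → E → Prop} (htr : ∀ x y z, r x y → r y z → r x z)
    (hirr : ∀ x, ¬ r x x) (s : Finset E)
    (htot : ∀ x ∈ s, ∀ y ∈ s, x ≠ y → r x y ∨ r y x) :
    ∃ l, SortedOf r s l := by
  classical
  obtain ⟨n, hn⟩ : ∃ n, s.card = n := ⟨_, rfl⟩
  induction n generalizing s with
  | zero =>
    refine ⟨[], ?_, List.nodup_nil, List.Pairwise.nil⟩
    rw [Finset.card_eq_zero.1 hn]
    simp
  | succ n ih =>
    have hs : s.Nonempty := Finset.card_pos.1 (by omega)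
    obtain ⟨m, hm, hmin⟩ := exists_minimal' htr hirr s hs
    obtain ⟨l, hl1, hl2, hl3⟩ := ih (s.erase m)
      (fun x hx y hy => htot x (Finset.mem_of_mem_erase hx) y (Finset.mem_of_mem_erase hy))
      (by rw [Finset.card_erase_of_mem hm, hn]; rfl)
    refine ⟨m :: l, ?_, ?_, ?_⟩
    · rw [List.toFinset_cons, hl1, Finset.insert_erase hm]
    · refine List.nodup_cons.2 ⟨fun hml => ?_, hl2⟩
      have := hl1 ▸ List.mem_toFinset.2 hml
      exact (Finset.mem_erase.1 this).1 rfl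
    · refine List.pairwise_cons.2 ⟨fun x hx => ?_, hl3⟩
      have hx' := hl1 ▸ List.mem_toFinset.2 hx
      have hxs := Finset.mem_of_mem_erase hx'
      have hxm := (Finset.mem_erase.1 hx').1
      rcases htot m hm x hxs (Ne.symm hxm) with h | h
      · exact h
      · exact absurd h (hmin x hxs)

theorem sortedOf_unique {r : E → E → Prop} (htr : ∀ x y z, r x y → r y z → r x z)
    (hirr : ∀ x, ¬ r x x) {s : Finset E} {l₁ l₂ : List E}
    (h1 : SortedOf r s l₁) (h2 : SortedOf r s l₂) : l₁ = l₂ := by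
  haveI : IsAntisymm E r := ⟨fun a b h h' => absurd (htr _ _ _ h h') (hirr a)⟩
  refine List.Perm.eq_of_pairwise (fun a b _ _ h h' => absurd (htr _ _ _ h h') (hirr a)) h1.2.2 h2.2.2 ((List.perm_ext_iff_of_nodup h1.2.1 h2.2.1).2 ?_)
  intro a
  rw [← List.mem_toFinset, ← List.mem_toFinset, h1.1, h2.1]

end Sorted

section Encode
variable {E : Type u} {A : Type v} [DecidableEq E]

/-- The letter type: labels with source/target flags. -/
abbrev Letter (A : Type v) := List (A × Bool × Bool)

noncomputable def sortedEvents (P : Ipomset E A) : List E := by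
  classical exact if h : ∃ l, SortedOf P.evord P.events l then h.choose else []

omit [DecidableEq E] in
theorem evord_total_of_discrete {P : Ipomset E A} (hd : P.Discrete) :
    ∀ x ∈ P.events, ∀ y ∈ P.events, x ≠ y → P.evord x y ∨ P.evord y x := by
  intro x hx y hy hxy
  rcases P.order_total hx hy hxy with h | h | h | h
  · exact absurd h (hd _ _)
  · exact absurd h (hd _ _)
  · exact Or.inl h
  · exact Or.inr h

theorem sortedEvents_spec {P : Ipomset E A} (hd : P.Discrete) :
    SortedOf P.evord P.events (sortedEvents P) := by
  have hex : ∃ l, SortedOf P.evord P.events l :=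
    exists_sortedOf (r := P.evord) (fun _ _ _ h h' => P.evord_trans h h') P.evord_irrefl P.events
      (evord_total_of_discrete hd)
  rw [sortedEvents]
  classical
  rw [dif_pos hex]
  exact hex.choose_spec

theorem sortedEvents_eq {P : Ipomset E A} (hd : P.Discrete) {l : List E}
    (h : SortedOf P.evord P.events l) : sortedEvents P = l :=
  sortedOf_unique (r := P.evord) (fun _ _ _ h h' => P.evord_trans h h') P.evord_irrefl (sortedEvents_spec hd) h

noncomputable def encode (P : Ipomset E A) : Letter A :=
  (sortedEvents P).map fun x => (P.lab x, decide (x ∈ P.src), decide (x ∈ P.tgt))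


def isS (l : Letter A) : Bool := l.all fun e => e.2.2
def isT (l : Letter A) : Bool := l.all fun e => e.2.1
def isIdL (l : Letter A) : Bool := isS l && isT l
def countS (l : Letter A) : ℕ := (l.filter fun e => e.2.1).length
def countT (l : Letter A) : ℕ := (l.filter fun e => e.2.2).length
def srcE (l : Letter A) : List A := (l.filter fun e => e.2.1).map fun e => e.1
def tgtE (l : Letter A) : List A := (l.filter fun e => e.2.2).map fun e => e.1

theorem mem_sortedEvents {P : Ipomset E A} (hd : P.Discrete) {x : E} :
    x ∈ sortedEvents P ↔ x ∈ P.events := by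
  rw [← List.mem_toFinset, (sortedEvents_spec hd).1]

theorem encode_isS {P : Ipomset E A} (h : P.Starter) : isS (encode P) = true := by
  rw [isS, List.all_eq_true]
  rintro e he
  rw [encode, List.mem_map] at he
  obtain ⟨x, hx, rfl⟩ := he
  exact decide_eq_true (h.2 ▸ (mem_sortedEvents h.1).1 hx)

theorem encode_isT {P : Ipomset E A} (h : P.Terminator) : isT (encode P) = true := by
  rw [isT, List.all_eq_true]
  rintro e he
  rw [encode, List.mem_map] at he
  obtain ⟨x, hx, rfl⟩ := he
  exact decide_eq_true (h.2 ▸ (mem_sortedEvents h.1).1 hx)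

theorem isIdL_encode {P : Ipomset E A} (hd : P.Discrete) :
    isIdL (encode P) = true ↔ P.IsIdentity := by
  rw [isIdL, Bool.and_eq_true, isS, isT, List.all_eq_true, List.all_eq_true]
  constructor
  · intro h
    refine ⟨hd, ?_, ?_⟩
    · refine Finset.Subset.antisymm P.src_sub (fun x hx => ?_)
      have := h.2 _ (by
        rw [encode, List.mem_map]
        exact ⟨x, (mem_sortedEvents hd).2 hx, rfl⟩)
      exact of_decide_eq_true this
    · refine Finset.Subset.antisymm P.tgt_sub (fun x hx => ?_)
      have := h.1 _ (by
        rw [encode, List.mem_map]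
        exact ⟨x, (mem_sortedEvents hd).2 hx, rfl⟩)
      exact of_decide_eq_true this
  · rintro ⟨-, hs, ht⟩
    constructor
    · rintro e he
      rw [encode, List.mem_map] at he
      obtain ⟨x, hx, rfl⟩ := he
      exact decide_eq_true (ht ▸ (mem_sortedEvents hd).1 hx)
    · rintro e he
      rw [encode, List.mem_map] at he
      obtain ⟨x, hx, rfl⟩ := he
      exact decide_eq_true (hs ▸ (mem_sortedEvents hd).1 hx)

omit [DecidableEq E] in
theorem iso_discrete {P Q : Ipomset E A} (h : IpoIso P Q) (hd : P.Discrete) : Q.Discrete := by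
  obtain ⟨f, hf⟩ := h
  intro x y hxy
  obtain ⟨hx, hy⟩ := Q.lt_mem hxy
  obtain ⟨a, ha, rfl⟩ := hf.surj x hx
  obtain ⟨b, hb, rfl⟩ := hf.surj y hy
  exact hd a b ((hf.lt_iff a ha b hb).1 hxy)

omit [DecidableEq E] in
theorem iso_starter {P Q : Ipomset E A} (h : IpoIso P Q) (hP : P.Starter) : Q.Starter := by
  refine ⟨iso_discrete h hP.1, Finset.Subset.antisymm Q.tgt_sub fun y hy => ?_⟩
  obtain ⟨f, hf⟩ := h
  obtain ⟨a, ha, rfl⟩ := hf.surj y hy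
  exact (hf.tgt_iff a ha).1 (hP.2 ▸ ha)

omit [DecidableEq E] in
theorem iso_terminator {P Q : Ipomset E A} (h : IpoIso P Q) (hP : P.Terminator) :
    Q.Terminator := by
  refine ⟨iso_discrete h hP.1, Finset.Subset.antisymm Q.src_sub fun y hy => ?_⟩
  obtain ⟨f, hf⟩ := h
  obtain ⟨a, ha, rfl⟩ := hf.surj y hy
  exact (hf.src_iff a ha).1 (hP.2 ▸ ha)

omit [DecidableEq E] in
theorem iso_identity {P Q : Ipomset E A} (h : IpoIso P Q) (hP : P.IsIdentity) :
    Q.IsIdentity := by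
  obtain ⟨h1, h2⟩ := (iso_terminator h ⟨hP.1, hP.2.1⟩ : Q.Terminator)
  obtain ⟨-, h3⟩ := (iso_starter h ⟨hP.1, hP.2.2⟩ : Q.Starter)
  exact ⟨h1, h2, h3⟩

omit [DecidableEq E] in
theorem ipoIso_refl (P : Ipomset E A) : IpoIso P P :=
  ⟨id, ⟨fun x hx => hx, fun x _ y _ h => h, fun y hy => ⟨y, hy, rfl⟩, fun x _ => Iff.rfl,
    fun x _ => Iff.rfl, fun x _ => rfl, fun x _ y _ => Iff.rfl, fun x _ y _ _ _ => Iff.rfl⟩⟩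

theorem encode_iso {P Q : Ipomset E A} (h : IpoIso P Q) (hd : P.Discrete) :
    encode Q = encode P := by
  have hdQ : Q.Discrete := iso_discrete h hd
  obtain ⟨f, hf⟩ := h
  set l := sortedEvents P with hl
  have hspec := sortedEvents_spec hd
  have hmem : ∀ x ∈ l, x ∈ P.events := fun x hx => (mem_sortedEvents hd).1 hx
  have hQspec : SortedOf Q.evord Q.events (l.map f) := by
    refine ⟨?_, ?_, ?_⟩
    · ext y
      simp only [List.mem_toFinset, List.mem_map]
      constructor
      · rintro ⟨x, hx, rfl⟩; exact hf.maps x (hmem x hx)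
      · intro hy
        obtain ⟨a, ha, rfl⟩ := hf.surj y hy
        exact ⟨a, (mem_sortedEvents hd).2 ha, rfl⟩
    · exact hspec.2.1.map_on fun x hx y hy hxy => hf.inj x (hmem x hx) y (hmem y hy) hxy
    · rw [List.pairwise_map]
      refine hspec.2.2.imp_of_mem fun {a b} ha hb hab => ?_
      exact (hf.evord_iff a (hmem a ha) b (hmem b hb) (hd a b) (hd b a)).1 hab
  rw [encode, encode, ← hl, sortedEvents_eq hdQ hQspec, List.map_map]
  refine List.map_congr_left fun x hx => ?_
  have hxe := hmem x hx
  simp only [Function.comp]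
  rw [hf.lab_eq x hxe]
  congr 1
  congr 1
  · exact decide_eq_decide.2 (hf.src_iff x hxe).symm
  · exact decide_eq_decide.2 (hf.tgt_iff x hxe).symm

/-- sorted enumeration of a conclist -/
noncomputable def csorted (U : Conclist E A) : List E := by
  classical exact if h : ∃ l, SortedOf U.evord U.events l then h.choose else []

theorem csorted_spec (U : Conclist E A) : SortedOf U.evord U.events (csorted U) := by
  have hex : ∃ l, SortedOf U.evord U.events l :=
    exists_sortedOf (r := U.evord) (fun _ _ _ h h' => U.evord_trans h h') U.evord_irrefl U.events
      (fun x hx y hy hxy => U.evord_total hx hy hxy)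
  rw [csorted]
  classical
  rw [dif_pos hex]
  exact hex.choose_spec

theorem csorted_eq (U : Conclist E A) {l : List E} (h : SortedOf U.evord U.events l) :
    csorted U = l :=
  sortedOf_unique (r := U.evord) (fun _ _ _ h h' => U.evord_trans h h') U.evord_irrefl
    (csorted_spec U) h

noncomputable def clEnc (U : Conclist E A) : List (Option A) := (csorted U).map U.lab

theorem clEnc_iso {U V : Conclist E A} (h : ClIso U V) : clEnc V = clEnc U := by
  obtain ⟨f, hf⟩ := h
  set l := csorted U
  have hspec := csorted_spec U
  have hmem : ∀ x ∈ l, x ∈ U.events := fun x hx => by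
    rw [← List.mem_toFinset, hspec.1] at hx; exact hx
  have hVspec : SortedOf V.evord V.events (l.map f) := by
    refine ⟨?_, ?_, ?_⟩
    · ext y
      simp only [List.mem_toFinset, List.mem_map]
      constructor
      · rintro ⟨x, hx, rfl⟩; exact hf.maps x (hmem x hx)
      · intro hy
        obtain ⟨a, ha, rfl⟩ := hf.surj y hy
        exact ⟨a, by rw [← List.mem_toFinset, hspec.1]; exact ha, rfl⟩
    · exact hspec.2.1.map_on fun x hx y hy hxy => hf.inj x (hmem x hx) y (hmem y hy) hxy
    · rw [List.pairwise_map]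
      refine hspec.2.2.imp_of_mem fun {a b} ha hb hab => ?_
      exact (hf.evord_iff a (hmem a ha) b (hmem b hb)).1 hab
  rw [clEnc, clEnc, csorted_eq V hVspec, List.map_map]
  exact List.map_congr_left fun x hx => hf.lab_eq x (hmem x hx)

theorem csorted_tgtIface {P : Ipomset E A} (hd : P.Discrete) :
    csorted (P.tgtIface) = (sortedEvents P).filter fun x => decide (x ∈ P.tgt) := by
  refine csorted_eq _ ⟨?_, ?_, ?_⟩
  · ext x
    simp only [List.mem_toFinset, List.mem_filter]
    constructor
    · rintro ⟨hx, hx'⟩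
      exact (of_decide_eq_true hx' : x ∈ P.tgt)
    · intro hx
      exact ⟨(mem_sortedEvents hd).2 (P.tgt_sub hx), decide_eq_true hx⟩
  · exact (sortedEvents_spec hd).2.1.filter _
  · refine ((sortedEvents_spec hd).2.2.filter _).imp_of_mem fun {a b} ha hb hab => ?_
    refine ⟨?_, ?_, hab⟩
    · exact of_decide_eq_true ((List.mem_filter.1 ha).2)
    · exact of_decide_eq_true ((List.mem_filter.1 hb).2)

theorem csorted_srcIface {P : Ipomset E A} (hd : P.Discrete) :
    csorted (P.srcIface) = (sortedEvents P).filter fun x => decide (x ∈ P.src) := by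
  refine csorted_eq _ ⟨?_, ?_, ?_⟩
  · ext x
    simp only [List.mem_toFinset, List.mem_filter]
    constructor
    · rintro ⟨hx, hx'⟩
      exact (of_decide_eq_true hx' : x ∈ P.src)
    · intro hx
      exact ⟨(mem_sortedEvents hd).2 (P.src_sub hx), decide_eq_true hx⟩
  · exact (sortedEvents_spec hd).2.1.filter _
  · refine ((sortedEvents_spec hd).2.2.filter _).imp_of_mem fun {a b} ha hb hab => ?_
    refine ⟨?_, ?_, hab⟩
    · exact of_decide_eq_true ((List.mem_filter.1 ha).2)
    · exact of_decide_eq_true ((List.mem_filter.1 hb).2)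

theorem clEnc_tgtIface {P : Ipomset E A} (hd : P.Discrete) :
    clEnc (P.tgtIface) = (tgtE (encode P)).map some := by
  rw [clEnc, csorted_tgtIface hd, tgtE, encode, List.filter_map, List.map_map, List.map_map]
  refine List.map_congr_left fun x hx => ?_
  have hxt : x ∈ P.tgt := of_decide_eq_true ((List.mem_filter.1 hx).2)
  simp only [Function.comp, Ipomset.tgtIface, if_pos hxt]

theorem clEnc_srcIface {P : Ipomset E A} (hd : P.Discrete) :
    clEnc (P.srcIface) = (srcE (encode P)).map some := by
  rw [clEnc, csorted_srcIface hd, srcE, encode, List.filter_map, List.map_map, List.map_map]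
  refine List.map_congr_left fun x hx => ?_
  have hxt : x ∈ P.src := of_decide_eq_true ((List.mem_filter.1 hx).2)
  simp only [Function.comp, Ipomset.srcIface, if_pos hxt]

theorem clIso_transfer {P Q : Ipomset E A} (hdP : P.Discrete) (hdQ : Q.Discrete)
    (h : ClIso P.tgtIface Q.srcIface) : tgtE (encode P) = srcE (encode Q) := by
  have := clEnc_iso h
  rw [clEnc_tgtIface hdP, clEnc_srcIface hdQ] at this
  exact List.map_injective_iff.2 (Option.some_injective A) this.symm

end Encode

section Letters
variable {A : Type v}

def mergeS : Letter A → Letter A → Letter A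
  | _, [] => []
  | [], e :: q => e :: mergeS [] q
  | f :: p, e :: q =>
    if e.2.1 then (e.1, f.2.1, e.2.2) :: mergeS p q else e :: mergeS (f :: p) q

def mergeT : Letter A → Letter A → Letter A
  | [], _ => []
  | e :: p, [] => e :: mergeT p []
  | e :: p, f :: q =>
    if e.2.2 then (e.1, e.2.1, f.2.2) :: mergeT p q else e :: mergeT p (f :: q)

@[simp] theorem mergeS_nil_right (p : Letter A) : mergeS p [] = [] := by
  cases p <;> rfl

@[simp] theorem mergeT_nil_right (p : Letter A) : mergeT p [] = p := by
  induction p with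
  | nil => rfl
  | cons e p ih => rw [mergeT, ih]

theorem mergeS_cons_false {e : A × Bool × Bool} (h : e.2.1 = false) (p q : Letter A) :
    mergeS p (e :: q) = e :: mergeS p q := by
  cases p <;> simp [mergeS, h]

theorem mergeT_cons_false {e : A × Bool × Bool} (h : e.2.2 = false) (p q : Letter A) :
    mergeT (e :: p) q = e :: mergeT p q := by
  cases q <;> simp [mergeT, h]

/-- labels and target flags of a starter-merge come from the second argument -/
theorem mergeS_proj (p q : Letter A) :
    (mergeS p q).map (fun e => (e.1, e.2.2)) = q.map (fun e => (e.1, e.2.2)) := by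
  induction q generalizing p with
  | nil => simp
  | cons e q ih =>
    obtain ⟨a, s, t⟩ := e
    cases s with
    | false => rw [mergeS_cons_false rfl]; simp only [List.map_cons, ih]
    | true => cases p with
      | nil => simp only [mergeS, List.map_cons, ih]
      | cons f p => simp only [mergeS, if_pos]; simp only [List.map_cons, ih]

/-- labels and source flags of a terminator-merge come from the first argument -/
theorem mergeT_proj (p q : Letter A) :
    (mergeT p q).map (fun e => (e.1, e.2.1)) = p.map (fun e => (e.1, e.2.1)) := by
  induction p generalizing q with
  | nil => simp [mergeT]
  | cons e p ih =>
    obtain ⟨a, s, t⟩ := e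
    cases t with
    | false => rw [mergeT_cons_false rfl]; simp only [List.map_cons, ih]
    | true => cases q with
      | nil => simp
      | cons f q => simp only [mergeT, if_pos]; simp only [List.map_cons, ih]

theorem all_map' {α β} (f : α → β) (p : β → Bool) (l : List α) :
    (l.map f).all p = l.all fun x => p (f x) := by
  induction l with
  | nil => rfl
  | cons e l ih => simp only [List.map_cons, List.all_cons, ih]

theorem isS_of_proj {l l' : Letter A}
    (h : l.map (fun e => (e.1, e.2.2)) = l'.map (fun e => (e.1, e.2.2))) : isS l = isS l' := by
  have h2 := congrArg (fun m => m.all fun x => x.2) h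
  simp only [all_map'] at h2
  exact h2

theorem tgtE_of_proj {l l' : Letter A}
    (h : l.map (fun e => (e.1, e.2.2)) = l'.map (fun e => (e.1, e.2.2))) : tgtE l = tgtE l' := by
  have h2 := congrArg (fun m => (m.filter fun x => x.2).map fun x => x.1) h
  simpa only [tgtE, List.filter_map, List.map_map, Function.comp_def] using h2

theorem countT_of_proj {l l' : Letter A}
    (h : l.map (fun e => (e.1, e.2.2)) = l'.map (fun e => (e.1, e.2.2))) : countT l = countT l' := by
  have h2 := congrArg (fun m => ((m.filter fun x => x.2).length : ℕ)) h
  simpa only [countT, List.filter_map, List.length_map, Function.comp_def] using h2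

theorem isT_of_proj {l l' : Letter A}
    (h : l.map (fun e => (e.1, e.2.1)) = l'.map (fun e => (e.1, e.2.1))) : isT l = isT l' := by
  have h2 := congrArg (fun m => m.all fun x => x.2) h
  simp only [all_map'] at h2
  exact h2

theorem srcE_of_proj {l l' : Letter A}
    (h : l.map (fun e => (e.1, e.2.1)) = l'.map (fun e => (e.1, e.2.1))) : srcE l = srcE l' := by
  have h2 := congrArg (fun m => (m.filter fun x => x.2).map fun x => x.1) h
  simpa only [srcE, List.filter_map, List.map_map, Function.comp_def] using h2

theorem countS_of_proj {l l' : Letter A}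
    (h : l.map (fun e => (e.1, e.2.1)) = l'.map (fun e => (e.1, e.2.1))) : countS l = countS l' := by
  have h2 := congrArg (fun m => ((m.filter fun x => x.2).length : ℕ)) h
  simpa only [countS, List.filter_map, List.length_map, Function.comp_def] using h2

theorem isS_mergeS (p q : Letter A) : isS (mergeS p q) = isS q := isS_of_proj (mergeS_proj p q)
theorem tgtE_mergeS (p q : Letter A) : tgtE (mergeS p q) = tgtE q := tgtE_of_proj (mergeS_proj p q)
theorem countT_mergeS (p q : Letter A) : countT (mergeS p q) = countT q :=
  countT_of_proj (mergeS_proj p q)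
theorem isT_mergeT (p q : Letter A) : isT (mergeT p q) = isT p := isT_of_proj (mergeT_proj p q)
theorem srcE_mergeT (p q : Letter A) : srcE (mergeT p q) = srcE p := srcE_of_proj (mergeT_proj p q)
theorem countS_mergeT (p q : Letter A) : countS (mergeT p q) = countS p :=
  countS_of_proj (mergeT_proj p q)

theorem mergeS_length (p q : Letter A) : (mergeS p q).length = q.length := by
  have := congrArg List.length (mergeS_proj p q)
  simpa using this

theorem mergeT_length (p q : Letter A) : (mergeT p q).length = p.length := by
  have := congrArg List.length (mergeT_proj p q)
  simpa using this


theorem countS_eq (l : Letter A) : countS l = (srcE l).length := by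
  simp [countS, srcE]

theorem countT_eq (l : Letter A) : countT l = (tgtE l).length := by
  simp [countT, tgtE]

theorem countS_of_isT {l : Letter A} (h : isT l = true) : countS l = l.length := by
  rw [countS, List.filter_eq_self.2 (List.all_eq_true.1 h)]

theorem countT_of_isS {l : Letter A} (h : isS l = true) : countT l = l.length := by
  rw [countT, List.filter_eq_self.2 (List.all_eq_true.1 h)]

theorem srcE_of_isT {l : Letter A} (h : isT l = true) : srcE l = l.map fun e => e.1 := by
  rw [srcE, List.filter_eq_self.2 (List.all_eq_true.1 h)]

theorem tgtE_of_isS {l : Letter A} (h : isS l = true) : tgtE l = l.map fun e => e.1 := by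
  rw [tgtE, List.filter_eq_self.2 (List.all_eq_true.1 h)]

theorem srcE_eq_tgtE_of_isId {l : Letter A} (h : isIdL l = true) : srcE l = tgtE l := by
  obtain ⟨h1, h2⟩ := Bool.and_eq_true_iff.1 h
  rw [srcE_of_isT h2, tgtE_of_isS h1]

theorem countT_le_length (l : Letter A) : countT l ≤ l.length :=
  List.length_filter_le _ _

theorem countS_le_length (l : Letter A) : countS l ≤ l.length :=
  List.length_filter_le _ _

/-- if all source flags of a starter-merge are true then so were those of `q` -/
theorem isT_mergeS_mono (p q : Letter A) (h : isT (mergeS p q) = true) : isT q = true := by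
  induction q generalizing p with
  | nil => rfl
  | cons e q ih =>
    obtain ⟨a, s, t⟩ := e
    cases s with
    | false =>
      rw [mergeS_cons_false rfl] at h
      simp only [isT, List.all_cons, Bool.and_eq_true] at h
      exact absurd h.1 (by simp)
    | true =>
      simp only [isT, List.all_cons, Bool.and_eq_true]
      cases p with
      | nil =>
        rw [mergeS] at h
        simp only [isT, List.all_cons, Bool.and_eq_true] at h
        exact ⟨h.1, ih [] (by rw [isT]; exact h.2)⟩
      | cons f p =>
        simp only [mergeS, if_pos] at h
        simp only [isT, List.all_cons, Bool.and_eq_true] at h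
        exact ⟨trivial, ih p (by rw [isT]; exact h.2)⟩

/-- if all target flags of a terminator-merge are true then so were those of `p` -/
theorem isS_mergeT_mono (p q : Letter A) (h : isS (mergeT p q) = true) : isS p = true := by
  induction p generalizing q with
  | nil => rfl
  | cons e p ih =>
    obtain ⟨a, s, t⟩ := e
    cases t with
    | false =>
      rw [mergeT_cons_false rfl] at h
      simp only [isS, List.all_cons, Bool.and_eq_true] at h
      exact absurd h.1 (by simp)
    | true =>
      simp only [isS, List.all_cons, Bool.and_eq_true]
      cases q with
      | nil =>
        rw [mergeT] at h
        simp only [isS, List.all_cons, Bool.and_eq_true] at h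
        exact ⟨trivial, ih [] (by rw [isS]; exact h.2)⟩
      | cons f q =>
        simp only [mergeT, if_pos] at h
        simp only [isS, List.all_cons, Bool.and_eq_true] at h
        exact ⟨trivial, ih q (by rw [isS]; exact h.2)⟩

theorem isS_mergeT_strong (p q : Letter A) (hal : q.length ≤ countT p)
    (h : isS (mergeT p q) = true) : isS q = true := by
  induction p generalizing q with
  | nil =>
    simp only [countT, List.filter_nil, List.length_nil, Nat.le_zero,
      List.length_eq_zero_iff] at hal
    subst hal; rfl
  | cons e p ih =>
    obtain ⟨a, s, t⟩ := e
    cases q with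
    | nil => rfl
    | cons f q =>
      cases t with
      | false =>
        rw [mergeT_cons_false rfl] at h
        simp only [isS, List.all_cons, Bool.and_eq_true] at h
        exact absurd h.1 (by simp)
      | true =>
        simp only [mergeT, if_pos] at h
        simp only [isS, List.all_cons, Bool.and_eq_true] at h ⊢
        have hal' : q.length ≤ countT p := by
          have hc : countT ((a, s, true) :: p) = countT p + 1 := by simp [countT]
          rw [hc] at hal
          simp only [List.length_cons] at hal
          omega
        exact ⟨h.1, ih q hal' (by rw [isS]; exact h.2)⟩

theorem mergeS_isT_left (p q : Letter A) (hp : isT p = true) (hal : countS q ≤ p.length) :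
    mergeS p q = q := by
  induction q generalizing p with
  | nil => simp
  | cons e q ih =>
    obtain ⟨a, s, t⟩ := e
    cases s with
    | false =>
      rw [mergeS_cons_false rfl]
      congr 1
      refine ih p hp (le_trans (le_of_eq ?_) hal)
      simp [countS]
    | true =>
      cases p with
      | nil => simp [countS] at hal
      | cons f p =>
        obtain ⟨b, s', t'⟩ := f
        simp only [isT, List.all_cons, Bool.and_eq_true] at hp
        have hs' : s' = true := hp.1
        subst hs'
        simp only [mergeS, if_pos]
        congr 1
        refine ih p (by rw [isT]; exact hp.2) ?_
        have : countS ((a, true, t) :: q) = countS q + 1 := by simp [countS]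
        simp only [List.length_cons] at hal
        omega

theorem mergeT_isS_right (p q : Letter A) (hq : isS q = true) (hal : countT p ≤ q.length) :
    mergeT p q = p := by
  induction p generalizing q with
  | nil => rfl
  | cons e p ih =>
    obtain ⟨a, s, t⟩ := e
    cases t with
    | false =>
      rw [mergeT_cons_false rfl]
      congr 1
      refine ih q hq (le_trans (le_of_eq ?_) hal)
      simp [countT]
    | true =>
      cases q with
      | nil => simp [countT] at hal
      | cons f q =>
        obtain ⟨b, s', t'⟩ := f
        simp only [isS, List.all_cons, Bool.and_eq_true] at hq
        have ht' : t' = true := hq.1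
        subst ht'
        simp only [mergeT, if_pos]
        congr 1
        refine ih q (by rw [isS]; exact hq.2) ?_
        have : countT ((a, s, true) :: p) = countT p + 1 := by simp [countT]
        simp only [List.length_cons] at hal
        omega

theorem mergeS_assoc (x p q : Letter A) (hal : countS q ≤ p.length) :
    mergeS (mergeS x p) q = mergeS x (mergeS p q) := by
  induction q generalizing x p with
  | nil => simp
  | cons e q ih =>
    obtain ⟨a, s, t⟩ := e
    cases s with
    | false =>
      rw [mergeS_cons_false rfl, mergeS_cons_false rfl, mergeS_cons_false rfl]
      congr 1
      exact ih x p (le_trans (le_of_eq (by simp [countS])) hal)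
    | true =>
      have hq1 : countS ((a, true, t) :: q) = countS q + 1 := by simp [countS]
      cases p with
      | nil => rw [hq1] at hal; simp at hal
      | cons f p =>
        obtain ⟨b, s', t'⟩ := f
        have hal' : countS q ≤ p.length := by
          rw [hq1] at hal; simp only [List.length_cons] at hal; omega
        cases s' with
        | false =>
          rw [mergeS_cons_false (e := (b, false, t')) rfl x p]
          rw [show mergeS ((b, false, t') :: mergeS x p) ((a, true, t) :: q) =
            (a, false, t) :: mergeS (mergeS x p) q from by simp [mergeS]]
          rw [show mergeS ((b, false, t') :: p) ((a, true, t) :: q) =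
            (a, false, t) :: mergeS p q from by simp [mergeS]]
          rw [mergeS_cons_false (e := (a, false, t)) rfl x (mergeS p q)]
          congr 1
          exact ih x p hal'
        | true =>
          rw [show mergeS ((b, true, t') :: p) ((a, true, t) :: q) =
            (a, true, t) :: mergeS p q from by simp [mergeS]]
          cases x with
          | nil =>
            rw [show mergeS ([] : Letter A) ((b, true, t') :: p) =
              (b, true, t') :: mergeS [] p from by simp [mergeS]]
            rw [show mergeS ((b, true, t') :: mergeS [] p) ((a, true, t) :: q) =
              (a, true, t) :: mergeS (mergeS [] p) q from by simp [mergeS]]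
            rw [show mergeS ([] : Letter A) ((a, true, t) :: mergeS p q) =
              (a, true, t) :: mergeS [] (mergeS p q) from by simp [mergeS]]
            congr 1
            exact ih [] p hal'
          | cons g x' =>
            obtain ⟨c, s'', t''⟩ := g
            rw [show mergeS ((c, s'', t'') :: x') ((b, true, t') :: p) =
              (b, s'', t') :: mergeS x' p from by simp [mergeS]]
            rw [show mergeS ((b, s'', t') :: mergeS x' p) ((a, true, t) :: q) =
              (a, s'', t) :: mergeS (mergeS x' p) q from by simp [mergeS]]
            rw [show mergeS ((c, s'', t'') :: x') ((a, true, t) :: mergeS p q) =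
              (a, s'', t) :: mergeS x' (mergeS p q) from by simp [mergeS]]
            congr 1
            exact ih x' p hal'

theorem mergeT_assoc (x p q : Letter A) (hal : countT p = q.length) :
    mergeT (mergeT x p) q = mergeT x (mergeT p q) := by
  induction x generalizing p q with
  | nil => simp [mergeT]
  | cons e x ih =>
    obtain ⟨a, s, t⟩ := e
    cases t with
    | false =>
      rw [mergeT_cons_false rfl, mergeT_cons_false rfl, mergeT_cons_false rfl]
      congr 1
      exact ih p q hal
    | true =>
      cases p with
      | nil =>
        have : q = [] := by
          simpa [countT, List.length_eq_zero_iff, eq_comm] using hal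
        subst this
        simp [mergeT]
      | cons f p =>
        obtain ⟨b, s', t'⟩ := f
        rw [show mergeT ((a, s, true) :: x) ((b, s', t') :: p) =
          (a, s, t') :: mergeT x p from by simp [mergeT]]
        cases t' with
        | true =>
          have hq : countT ((b, s', true) :: p) = countT p + 1 := by simp [countT]
          rw [hq] at hal
          cases q with
          | nil => simp at hal
          | cons g q =>
            obtain ⟨c, s'', t''⟩ := g
            have hal' : countT p = q.length := by simpa using hal
            rw [show mergeT ((a, s, true) :: mergeT x p) ((c, s'', t'') :: q) =
              (a, s, t'') :: mergeT (mergeT x p) q from by simp [mergeT]]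
            rw [show mergeT ((b, s', true) :: p) ((c, s'', t'') :: q) =
              (b, s', t'') :: mergeT p q from by simp [mergeT]]
            rw [show mergeT ((a, s, true) :: x) ((b, s', t'') :: mergeT p q) =
              (a, s, t'') :: mergeT x (mergeT p q) from by simp [mergeT]]
            congr 1
            exact ih p q hal'
        | false =>
          have hq : countT ((b, s', false) :: p) = countT p := by simp [countT]
          rw [hq] at hal
          rw [mergeT_cons_false (e := (a, s, false)) rfl (mergeT x p) q,
            mergeT_cons_false (e := (b, s', false)) rfl p q]
          rw [show mergeT ((a, s, true) :: x) ((b, s', false) :: mergeT p q) =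
            (a, s, false) :: mergeT x (mergeT p q) from by simp [mergeT]]
          congr 1
          exact ih p q hal

theorem srcE_mergeS (p q : Letter A) (hlab : p.map (fun e => e.1) = srcE q) :
    srcE (mergeS p q) = srcE p := by
  induction q generalizing p with
  | nil =>
    simp only [srcE, List.filter_nil, List.map_nil] at hlab ⊢
    rw [List.map_eq_nil_iff] at hlab
    subst hlab
    simp [srcE]
  | cons e q ih =>
    obtain ⟨a, s, t⟩ := e
    cases s with
    | false =>
      rw [mergeS_cons_false rfl]
      have : srcE ((a, false, t) :: q) = srcE q := by simp [srcE]
      rw [this] at hlab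
      have h2 : srcE ((a, false, t) :: mergeS p q) = srcE (mergeS p q) := by simp [srcE]
      rw [h2, ih p hlab]
    | true =>
      have : srcE ((a, true, t) :: q) = a :: srcE q := by simp [srcE]
      rw [this] at hlab
      cases p with
      | nil => simp at hlab
      | cons f p =>
        obtain ⟨b, s', t'⟩ := f
        simp only [List.map_cons, List.cons.injEq] at hlab
        obtain ⟨rfl, hlab2⟩ := hlab
        rw [show mergeS ((b, s', t') :: p) ((b, true, t) :: q) =
          (b, s', t) :: mergeS p q from by simp [mergeS]]
        cases s' with
        | false =>
          have h1 : srcE ((b, false, t) :: mergeS p q) = srcE (mergeS p q) := by simp [srcE]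
          have h2 : srcE ((b, false, t') :: p) = srcE p := by simp [srcE]
          rw [h1, h2, ih p hlab2]
        | true =>
          have h1 : srcE ((b, true, t) :: mergeS p q) = b :: srcE (mergeS p q) := by simp [srcE]
          have h2 : srcE ((b, true, t') :: p) = b :: srcE p := by simp [srcE]
          rw [h1, h2, ih p hlab2]

theorem tgtE_mergeT (x p : Letter A) (hlab : tgtE x = p.map fun e => e.1) :
    tgtE (mergeT x p) = tgtE p := by
  induction x generalizing p with
  | nil =>
    simp only [tgtE, List.filter_nil, List.map_nil] at hlab
    have := (List.map_eq_nil_iff).1 hlab.symm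
    subst this
    simp [mergeT, tgtE]
  | cons e x ih =>
    obtain ⟨a, s, t⟩ := e
    cases t with
    | false =>
      rw [mergeT_cons_false rfl]
      have : tgtE ((a, s, false) :: x) = tgtE x := by simp [tgtE]
      rw [this] at hlab
      have h2 : tgtE ((a, s, false) :: mergeT x p) = tgtE (mergeT x p) := by simp [tgtE]
      rw [h2, ih p hlab]
    | true =>
      have : tgtE ((a, s, true) :: x) = a :: tgtE x := by simp [tgtE]
      rw [this] at hlab
      cases p with
      | nil => simp at hlab
      | cons f p =>
        obtain ⟨b, s', t'⟩ := f
        simp only [List.map_cons, List.cons.injEq] at hlab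
        obtain ⟨heq, hlab2⟩ := hlab
        subst heq
        rw [show mergeT ((a, s, true) :: x) ((a, s', t') :: p) =
          (a, s, t') :: mergeT x p from by simp [mergeT]]
        cases t' with
        | false =>
          have h1 : tgtE ((a, s, false) :: mergeT x p) = tgtE (mergeT x p) := by simp [tgtE]
          have h2 : tgtE ((a, s', false) :: p) = tgtE p := by simp [tgtE]
          rw [h1, h2, ih p hlab2]
        | true =>
          have h1 : tgtE ((a, s, true) :: mergeT x p) = a :: tgtE (mergeT x p) := by simp [tgtE]
          have h2 : tgtE ((a, s', true) :: p) = a :: tgtE p := by simp [tgtE]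
          rw [h1, h2, ih p hlab2]


/-- interface matching of letters -/
def Link (p q : Letter A) : Prop := tgtE p = srcE q

theorem link_countS {p q : Letter A} (h : Link p q) : countS q ≤ p.length := by
  rw [countS_eq, ← h, ← countT_eq]
  exact countT_le_length p

theorem link_countT {p q : Letter A} (h : Link p q) (hq : isT q = true) :
    countT p = q.length := by
  rw [countT_eq, h, ← countS_eq, countS_of_isT hq]

theorem isT_false_of {p : Letter A} (hp : isS p = true) (hpn : isIdL p = false) :
    isT p = false := by
  cases hisT : isT p with
  | false => rfl
  | true => rw [isIdL, hp, hisT] at hpn; simp at hpn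

theorem isS_false_of {p : Letter A} (hp : isT p = true) (hpn : isIdL p = false) :
    isS p = false := by
  cases hisS : isS p with
  | false => rfl
  | true => rw [isIdL, hp, hisS] at hpn; simp at hpn

theorem isIdL_mergeS (p q : Letter A) (hq : isS q = true) (hqn : isIdL q = false) :
    isIdL (mergeS p q) = false := by
  cases hm : isT (mergeS p q) with
  | true => rw [isIdL, isT_mergeS_mono p q hm, hq] at hqn; simp at hqn
  | false => rw [isIdL, hm, Bool.and_false]

theorem isIdL_mergeT (p q : Letter A) (hp : isT p = true) (hpn : isIdL p = false) :
    isIdL (mergeT p q) = false := by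
  cases hm : isS (mergeT p q) with
  | true => rw [isIdL, isS_mergeT_mono p q hm, hp] at hpn; simp at hpn
  | false => rw [isIdL, hm, Bool.false_and]

noncomputable def mr : List (Letter A) → List (Letter A)
  | [] => []
  | [l] => [l]
  | l₁ :: l₂ :: r =>
    if isS l₁ && isS l₂ then mr (mergeS l₁ l₂ :: r)
    else if isT l₁ && isT l₂ then mr (mergeT l₁ l₂ :: r)
    else l₁ :: mr (l₂ :: r)
termination_by l => l.length
decreasing_by all_goals simp +arith +decide

@[simp] theorem mr_nil : mr ([] : List (Letter A)) = [] := by rw [mr]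
@[simp] theorem mr_single (l : Letter A) : mr [l] = [l] := by rw [mr]
theorem mr_cons₂ (l₁ l₂ : Letter A) (r : List (Letter A)) :
    mr (l₁ :: l₂ :: r) =
      if isS l₁ && isS l₂ then mr (mergeS l₁ l₂ :: r)
      else if isT l₁ && isT l₂ then mr (mergeT l₁ l₂ :: r)
      else l₁ :: mr (l₂ :: r) := by
  rw [mr]

theorem mr_glueS_base (v : List (Letter A)) (p q : Letter A)
    (hp : isS p = true) (hq : isS q = true) :
    mr (p :: q :: v) = mr (mergeS p q :: v) := by
  rw [mr_cons₂, if_pos (by rw [hp, hq]; rfl)]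

theorem mr_glueT_base (v : List (Letter A)) (p q : Letter A)
    (hp : isT p = true) (hq : isT q = true) (hps : isS p = false) :
    mr (p :: q :: v) = mr (mergeT p q :: v) := by
  rw [mr_cons₂, if_neg (by rw [hps]; simp), if_pos (by rw [hp, hq]; rfl)]

theorem mr_glueS (v : List (Letter A)) (q : Letter A) (hq : isS q = true)
    (hqn : isIdL q = false) :
    ∀ (n : ℕ) (u : List (Letter A)), u.length ≤ n → ∀ p, isS p = true → isIdL p = false →
      Link p q → mr (u ++ p :: q :: v) = mr (u ++ mergeS p q :: v) := by
  intro n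
  induction n with
  | zero =>
    intro u hu p hp hpn hl
    rw [List.length_eq_zero_iff.1 (Nat.le_zero.1 hu)]
    exact mr_glueS_base v p q hp hq
  | succ n ih =>
    intro u hu p hp hpn hl
    match u with
    | [] => exact mr_glueS_base v p q hp hq
    | [x] =>
      have hTp : isT p = false := isT_false_of hp hpn
      have hTq : isT q = false := isT_false_of hq hqn
      have hSm : isS (mergeS p q) = true := by rw [isS_mergeS, hq]
      have hTm : isT (mergeS p q) = false := by
        cases h : isT (mergeS p q) with
        | false => rfl
        | true => rw [isT_mergeS_mono p q h] at hTq; exact absurd hTq (by simp)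
      simp only [List.cons_append, List.nil_append]
      rw [mr_cons₂ x p (q :: v), mr_cons₂ x (mergeS p q) v]
      by_cases hx : isS x = true
      · rw [if_pos (by rw [hx, hp]; rfl), if_pos (by rw [hx, hSm]; rfl)]
        have h1 : mr (mergeS x p :: q :: v) = mr (mergeS (mergeS x p) q :: v) := by
          have := ih [] (by simp) (mergeS x p) (by rw [isS_mergeS, hp])
            (isIdL_mergeS x p hp hpn) (by rw [Link, tgtE_mergeS]; exact hl)
          simpa using this
        rw [h1, mergeS_assoc x p q (link_countS hl)]
      · have hx' : isS x = false := by cases h : isS x; rfl; exact absurd h hx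
        rw [if_neg (by rw [hx']; simp), if_neg (by rw [hTp]; simp),
          if_neg (by rw [hx']; simp), if_neg (by rw [hTm]; simp)]
        congr 1
        exact mr_glueS_base v p q hp hq
    | x :: y :: u' =>
      have hlen : (y :: u').length ≤ n := by simpa using hu
      simp only [List.cons_append]
      rw [mr_cons₂ x y (u' ++ p :: q :: v), mr_cons₂ x y (u' ++ mergeS p q :: v)]
      by_cases c1 : (isS x && isS y) = true
      · rw [if_pos c1, if_pos c1]
        have := ih (mergeS x y :: u') (by simpa using hlen) p hp hpn hl
        simpa using this
      · rw [if_neg c1, if_neg c1]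
        by_cases c2 : (isT x && isT y) = true
        · rw [if_pos c2, if_pos c2]
          have := ih (mergeT x y :: u') (by simpa using hlen) p hp hpn hl
          simpa using this
        · rw [if_neg c2, if_neg c2]
          congr 1
          have := ih (y :: u') hlen p hp hpn hl
          simpa using this

theorem chain'_replace_head {R : α → α → Prop} {y m : α} {rest : List α}
    (h : List.Chain' R (y :: rest)) (hm : ∀ z ∈ rest.head?, R m z) :
    List.Chain' R (m :: rest) :=
  List.isChain_cons.2 ⟨hm, (List.isChain_cons.1 h).2⟩

theorem mr_glueT (v : List (Letter A)) (q : Letter A) (hq : isT q = true)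
    (hqn : isIdL q = false) :
    ∀ (n : ℕ) (u : List (Letter A)), u.length ≤ n → ∀ p, isT p = true → isIdL p = false →
      Link p q → List.Chain' Link (u ++ p :: q :: v) →
      mr (u ++ p :: q :: v) = mr (u ++ mergeT p q :: v) := by
  intro n
  induction n with
  | zero =>
    intro u hu p hp hpn hl hch
    rw [List.length_eq_zero_iff.1 (Nat.le_zero.1 hu)]
    exact mr_glueT_base v p q hp hq (isS_false_of hp hpn)
  | succ n ih =>
    intro u hu p hp hpn hl hch
    match u with
    | [] => exact mr_glueT_base v p q hp hq (isS_false_of hp hpn)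
    | [x] =>
      have hSp : isS p = false := isS_false_of hp hpn
      have hSq : isS q = false := isS_false_of hq hqn
      have hTm : isT (mergeT p q) = true := by rw [isT_mergeT, hp]
      have hSm : isS (mergeT p q) = false := by
        cases h : isS (mergeT p q) with
        | false => rfl
        | true => rw [isS_mergeT_mono p q h] at hSp; exact absurd hSp (by simp)
      have hlxp : Link x p := by
        have := hch
        simp only [List.cons_append, List.nil_append] at this
        exact (List.isChain_cons_cons.1 this).1
      have hchpqv : List.Chain' Link (p :: q :: v) := by
        have := hch
        simp only [List.cons_append, List.nil_append] at this
        exact (List.isChain_cons_cons.1 this).2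
      simp only [List.cons_append, List.nil_append]
      rw [mr_cons₂ x p (q :: v), mr_cons₂ x (mergeT p q) v]
      by_cases hx : isT x = true
      · rw [if_neg (by rw [hSp]; simp), if_pos (by rw [hx, hp]; rfl),
          if_neg (by rw [hSm]; simp), if_pos (by rw [hx, hTm]; rfl)]
        have hlabxp : tgtE x = p.map fun e => e.1 := by
          rw [← srcE_of_isT hp]; exact hlxp
        have hnm : isIdL (mergeT x p) = false := by
          have hSxp : isS (mergeT x p) = false := by
            cases h : isS (mergeT x p) with
            | false => rfl
            | true =>
              by_cases hxS : isS x = true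
              · have hlen : p.length ≤ countT x := by
                  rw [link_countT hlxp hp]
                exact absurd (isS_mergeT_strong x p hlen h) (by rw [hSp]; simp)
              · have : isS x = true := isS_mergeT_mono x p h
                exact absurd this hxS
          rw [isIdL, hSxp, Bool.false_and]
        have h1 : mr (mergeT x p :: q :: v) = mr (mergeT (mergeT x p) q :: v) := by
          have := ih [] (by simp) (mergeT x p) (by rw [isT_mergeT, hx]) hnm
            (by rw [Link, tgtE_mergeT x p hlabxp]; exact hl)
            (by
              simp only [List.nil_append]
              refine chain'_replace_head hchpqv ?_
              intro z hz
              simp only [List.head?_cons, Option.mem_some_iff] at hz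
              subst hz
              rw [Link, tgtE_mergeT x p hlabxp]
              exact hl)
          simpa using this
        rw [h1, mergeT_assoc x p q (link_countT hl hq)]
      · have hx' : isT x = false := by cases h : isT x; rfl; exact absurd h hx
        rw [if_neg (by rw [hSp]; simp), if_neg (by rw [hx']; simp),
          if_neg (by rw [hSm]; simp), if_neg (by rw [hx']; simp)]
        congr 1
        exact mr_glueT_base v p q hp hq hSp
    | x :: y :: u' =>
      have hlen : (y :: u').length ≤ n := by simpa using hu
      have hch' : List.Chain' Link (y :: (u' ++ p :: q :: v)) := by
        have := hch
        simp only [List.cons_append] at this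
        exact (List.isChain_cons_cons.1 this).2
      have hlxy : Link x y := by
        have := hch
        simp only [List.cons_append] at this
        exact (List.isChain_cons_cons.1 this).1
      simp only [List.cons_append]
      rw [mr_cons₂ x y (u' ++ p :: q :: v), mr_cons₂ x y (u' ++ mergeT p q :: v)]
      by_cases c1 : (isS x && isS y) = true
      · rw [if_pos c1, if_pos c1]
        have hchm : List.Chain' Link ((mergeS x y :: u') ++ p :: q :: v) := by
          simp only [List.cons_append]
          refine chain'_replace_head hch' ?_
          intro z hz
          rw [Link, tgtE_mergeS]
          have := List.isChain_cons.1 hch'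
          exact this.1 z hz
        have := ih (mergeS x y :: u') (by simpa using hlen) p hp hpn hl hchm
        simpa using this
      · rw [if_neg c1, if_neg c1]
        by_cases c2 : (isT x && isT y) = true
        · rw [if_pos c2, if_pos c2]
          have hyT : isT y = true := (Bool.and_eq_true_iff.1 c2).2
          have hchm : List.Chain' Link ((mergeT x y :: u') ++ p :: q :: v) := by
            simp only [List.cons_append]
            refine chain'_replace_head hch' ?_
            intro z hz
            rw [Link, tgtE_mergeT x y (by rw [← srcE_of_isT hyT]; exact hlxy)]
            have := List.isChain_cons.1 hch'
            exact this.1 z hz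
          have := ih (mergeT x y :: u') (by simpa using hlen) p hp hpn hl hchm
          simpa using this
        · rw [if_neg c2, if_neg c2]
          congr 1
          have := ih (y :: u') hlen p hp hpn hl hch'
          simpa using this


theorem mr_alt : ∀ w : List (Letter A),
    w.Chain' (fun p q => (isS p && isS q) = false ∧ (isT p && isT q) = false) → mr w = w
  | [], _ => by simp
  | [l], _ => by simp
  | l₁ :: l₂ :: r, hch => by
    have h1 := (List.isChain_cons_cons.1 hch).1
    have h2 := (List.isChain_cons_cons.1 hch).2
    rw [mr_cons₂, if_neg (by rw [h1.1]; simp), if_neg (by rw [h1.2]; simp)]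
    congr 1
    exact mr_alt (l₂ :: r) h2

theorem link_trans_id {x p z : Letter A} (hxp : Link x p) (hpz : Link p z)
    (hid : isIdL p = true) : Link x z := by
  rw [Link, hxp, srcE_eq_tgtE_of_isId hid, hpz]

theorem chain_filter_aux : ∀ (n : ℕ) (w : List (Letter A)), w.length ≤ n →
    (List.Chain' Link w → List.Chain' Link (w.filter fun l => !(isIdL l))) ∧
    (∀ a, List.Chain' Link (a :: w) →
      ∀ z ∈ (w.filter fun l => !(isIdL l)).head?, Link a z) := by
  intro n
  induction n with
  | zero =>
    intro w hw
    rw [List.length_eq_zero_iff.1 (Nat.le_zero.1 hw)]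
    exact ⟨fun _ => List.isChain_nil, fun a _ z hz => by simp at hz⟩
  | succ n ih =>
    intro w hw
    match w with
    | [] => exact ⟨fun _ => List.isChain_nil, fun a _ z hz => by simp at hz⟩
    | b :: w' =>
      have hw' : w'.length ≤ n := by simpa using hw
      constructor
      · intro hch
        by_cases hb : isIdL b = true
        · rw [List.filter_cons_of_neg (by simp [hb])]
          exact (ih w' hw').1 ((List.isChain_cons.1 hch).2)
        · rw [List.filter_cons_of_pos (by simp [Bool.eq_false_iff.2 hb])]
          refine List.isChain_cons.2 ⟨?_, (ih w' hw').1 ((List.isChain_cons.1 hch).2)⟩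
          exact (ih w' hw').2 b hch
      · intro a hch z hz
        by_cases hb : isIdL b = true
        · rw [List.filter_cons_of_neg (by simp [hb])] at hz
          have hab : Link a b := (List.isChain_cons_cons.1 hch).1
          have hbw : List.Chain' Link (b :: w') := (List.isChain_cons_cons.1 hch).2
          have haw : List.Chain' Link (a :: w') := by
            refine List.isChain_cons.2 ⟨?_, (List.isChain_cons.1 hbw).2⟩
            intro y hy
            exact link_trans_id hab ((List.isChain_cons.1 hbw).1 y hy) hb
          exact (ih w' hw').2 a haw z hz
        · rw [List.filter_cons_of_pos (by simp [Bool.eq_false_iff.2 hb])] at hz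
          simp only [List.head?_cons, Option.mem_some_iff] at hz
          subst hz
          exact (List.isChain_cons_cons.1 hch).1

theorem chain_filter_nonid {w : List (Letter A)} (h : List.Chain' Link w) :
    List.Chain' Link (w.filter fun l => !(isIdL l)) :=
  (chain_filter_aux w.length w le_rfl).1 h

theorem id_letter_eq {l : Letter A} (h : isIdL l = true) :
    l = (l.map fun e => e.1).map fun a => (a, true, true) := by
  rw [isIdL, Bool.and_eq_true] at h
  obtain ⟨h1, h2⟩ := h
  induction l with
  | nil => rfl
  | cons e l ih =>
    obtain ⟨a, s, t⟩ := e
    simp only [isS, isT, List.all_cons, Bool.and_eq_true] at h1 h2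
    simp only [List.map_cons, List.cons.injEq]
    refine ⟨?_, ih (by rw [isS]; exact h1.2) (by rw [isT]; exact h2.2)⟩
    have ht : t = true := h1.1
    have hs : s = true := h2.1
    rw [ht, hs]

theorem id_letters_eq {p z : Letter A} (hp : isIdL p = true) (hz : isIdL z = true)
    (hl : Link p z) : p = z := by
  have h1 : tgtE p = p.map fun e => e.1 := tgtE_of_isS (Bool.and_eq_true_iff.1 hp).1
  have h2 : srcE z = z.map fun e => e.1 := srcE_of_isT (Bool.and_eq_true_iff.1 hz).2
  have h3 : (p.map fun e => e.1) = z.map fun e => e.1 := by rw [← h1, hl, h2]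
  rw [id_letter_eq hp, id_letter_eq hz, h3]

theorem mergeS_id_right {p q : Letter A} (hqT : isT q = true) (hqS : isS q = true)
    (hpS : isS p = true) (hlab : p.map (fun e => e.1) = q.map fun e => e.1) :
    mergeS p q = p := by
  induction q generalizing p with
  | nil =>
    rw [List.map_nil, List.map_eq_nil_iff] at hlab
    subst hlab; simp
  | cons e q ih =>
    obtain ⟨a, sq, tq⟩ := e
    simp only [isT, isS, List.all_cons, Bool.and_eq_true] at hqT hqS
    have hsq : sq = true := hqT.1
    subst hsq
    cases p with
    | nil => simp at hlab
    | cons f p =>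
      obtain ⟨b, sp, tp⟩ := f
      simp only [isS, List.all_cons, Bool.and_eq_true] at hpS
      have htp : tp = true := hpS.1
      subst htp
      simp only [List.map_cons, List.cons.injEq] at hlab
      obtain ⟨heq, hlab2⟩ := hlab
      subst heq
      rw [show mergeS ((b, sp, true) :: p) ((b, true, tq) :: q) =
        (b, sp, tq) :: mergeS p q from by simp [mergeS]]
      have htq : tq = true := hqS.1
      rw [htq]
      congr 1
      exact ih (show isT q = true from hqT.2) (show isS q = true from hqS.2)
        (show isS p = true from hpS.2) hlab2

theorem mergeT_id_left {p q : Letter A} (hpS : isS p = true) (hpT : isT p = true)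
    (hqT : isT q = true) (hlab : p.map (fun e => e.1) = q.map fun e => e.1) :
    mergeT p q = q := by
  induction p generalizing q with
  | nil =>
    rw [List.map_nil] at hlab
    have := List.map_eq_nil_iff.1 hlab.symm
    subst this; rfl
  | cons e p ih =>
    obtain ⟨a, sp, tp⟩ := e
    simp only [isT, isS, List.all_cons, Bool.and_eq_true] at hpT hpS
    have htp : tp = true := hpS.1
    subst htp
    cases q with
    | nil => simp at hlab
    | cons f q =>
      obtain ⟨b, sq, tq⟩ := f
      simp only [isT, List.all_cons, Bool.and_eq_true] at hqT
      have hsq : sq = true := hqT.1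
      subst hsq
      simp only [List.map_cons, List.cons.injEq] at hlab
      obtain ⟨heq, hlab2⟩ := hlab
      subst heq
      rw [show mergeT ((a, sp, true) :: p) ((a, true, tq) :: q) =
        (a, sp, tq) :: mergeT p q from by simp [mergeT]]
      have hsp : sp = true := hpT.1
      rw [hsp]
      congr 1
      exact ih (show isS p = true from hpS.2) (show isT p = true from hpT.2)
        (show isT q = true from hqT.2) hlab2

open Classical in
noncomputable def NF (w : List (Letter A)) : List (Letter A) :=
  if (w.filter fun l => !(isIdL l)) = [] then [w.headI] else mr (w.filter fun l => !(isIdL l))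

theorem headI_append_cons (u v : List (Letter A)) (p : Letter A) (hne : u ≠ [] → False) :
    True := trivial

theorem NF_congr_filter {w w' : List (Letter A)}
    (hf : (w.filter fun l => !(isIdL l)) = w'.filter fun l => !(isIdL l))
    (hh : (w.filter fun l => !(isIdL l)) = [] → w.headI = w'.headI) : NF w = NF w' := by
  classical
  rw [NF, NF, hf]
  by_cases hemp : (w'.filter fun l => !(isIdL l)) = []
  · rw [if_pos hemp, if_pos hemp, hh (hf.trans hemp)]
  · rw [if_neg hemp, if_neg hemp]

theorem filter_cons_id {p : Letter A} (h : isIdL p = true) (w : List (Letter A)) :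
    ((p :: w).filter fun l => !(isIdL l)) = w.filter fun l => !(isIdL l) :=
  List.filter_cons_of_neg (by simp [h])

theorem filter_cons_nonid {p : Letter A} (h : isIdL p = false) (w : List (Letter A)) :
    ((p :: w).filter fun l => !(isIdL l)) = p :: w.filter fun l => !(isIdL l) :=
  List.filter_cons_of_pos (by simp [h])

theorem NF_glueS (u v : List (Letter A)) (p q : Letter A)
    (hp : isS p = true) (hq : isS q = true) (hl : Link p q) :
    NF (u ++ p :: q :: v) = NF (u ++ mergeS p q :: v) := by
  classical
  set m := mergeS p q with hm
  have hfu : ∀ w, ((u ++ w).filter fun l => !(isIdL l)) =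
      ((u.filter fun l => !(isIdL l)) ++ w.filter fun l => !(isIdL l)) := by
    intro w; rw [List.filter_append]
  by_cases hpid : isIdL p = true
  · -- p identity: m = q
    have hmq : m = q := by
      rw [hm]
      exact mergeS_isT_left p q (Bool.and_eq_true_iff.1 hpid).2 (link_countS hl)
    refine NF_congr_filter ?_ ?_
    · rw [hfu, hfu, filter_cons_id hpid, hmq]
    · intro hemp
      have hqid : isIdL q = true := by
        rw [List.filter_eq_nil_iff] at hemp
        have := hemp q (by simp)
        simpa using this
      cases u with
      | nil =>
        simp only [List.nil_append, List.headI]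
        rw [hmq]
        exact id_letters_eq hpid hqid hl
      | cons a u => rfl
  · by_cases hqid : isIdL q = true
    · -- q identity: m = p
      have hmp : m = p := by
        rw [hm]
        refine mergeS_id_right (Bool.and_eq_true_iff.1 hqid).2 hq hp ?_
        rw [← tgtE_of_isS hp, hl, srcE_of_isT (Bool.and_eq_true_iff.1 hqid).2]
      refine NF_congr_filter ?_ ?_
      · rw [hfu, hfu, filter_cons_nonid (by rw [Bool.eq_false_iff]; exact hpid) _,
          filter_cons_id hqid, hmp,
          filter_cons_nonid (by rw [Bool.eq_false_iff]; exact hpid) _]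
      · intro _
        cases u with
        | nil =>
          simp only [List.nil_append, List.headI]
          exact hmp.symm
        | cons a u => rfl
    · -- both non-identities
      have hpn : isIdL p = false := by rw [Bool.eq_false_iff]; exact hpid
      have hqn : isIdL q = false := by rw [Bool.eq_false_iff]; exact hqid
      have hmn : isIdL m = false := hm ▸ isIdL_mergeS p q hq hqn
      rw [NF, NF, hfu, hfu, filter_cons_nonid hpn, filter_cons_nonid hqn,
        filter_cons_nonid hmn]
      rw [if_neg (by simp), if_neg (by simp)]
      exact mr_glueS (v.filter fun l => !(isIdL l)) q hq hqn
        (u.filter fun l => !(isIdL l)).length _ le_rfl p hp hpn hl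

theorem NF_glueT (u v : List (Letter A)) (p q : Letter A)
    (hp : isT p = true) (hq : isT q = true) (hl : Link p q)
    (hch : List.Chain' Link (u ++ p :: q :: v)) :
    NF (u ++ p :: q :: v) = NF (u ++ mergeT p q :: v) := by
  classical
  set m := mergeT p q with hm
  have hfu : ∀ w, ((u ++ w).filter fun l => !(isIdL l)) =
      ((u.filter fun l => !(isIdL l)) ++ w.filter fun l => !(isIdL l)) := by
    intro w; rw [List.filter_append]
  by_cases hpid : isIdL p = true
  · -- p identity: m = q
    have hmq : m = q := by
      rw [hm]
      refine mergeT_id_left (Bool.and_eq_true_iff.1 hpid).1 hp hq ?_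
      rw [← tgtE_of_isS (Bool.and_eq_true_iff.1 hpid).1, hl, srcE_of_isT hq]
    refine NF_congr_filter ?_ ?_
    · rw [hfu, hfu, filter_cons_id hpid, hmq]
    · intro hemp
      have hqid : isIdL q = true := by
        rw [List.filter_eq_nil_iff] at hemp
        have := hemp q (by simp)
        simpa using this
      cases u with
      | nil =>
        simp only [List.nil_append, List.headI]
        rw [hmq]
        exact id_letters_eq hpid hqid hl
      | cons a u => rfl
  · by_cases hqid : isIdL q = true
    · -- q identity: m = p
      have hmp : m = p := by
        rw [hm]
        exact mergeT_isS_right p q (Bool.and_eq_true_iff.1 hqid).1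
          (le_of_eq (link_countT hl hq))
      refine NF_congr_filter ?_ ?_
      · rw [hfu, hfu, filter_cons_nonid (by rw [Bool.eq_false_iff]; exact hpid) _,
          filter_cons_id hqid, hmp,
          filter_cons_nonid (by rw [Bool.eq_false_iff]; exact hpid) _]
      · intro _
        cases u with
        | nil =>
          simp only [List.nil_append, List.headI]
          exact hmp.symm
        | cons a u => rfl
    · -- both non-identities
      have hpn : isIdL p = false := by rw [Bool.eq_false_iff]; exact hpid
      have hqn : isIdL q = false := by rw [Bool.eq_false_iff]; exact hqid
      have hmn : isIdL m = false := hm ▸ isIdL_mergeT p q hp hpn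
      rw [NF, NF, hfu, hfu, filter_cons_nonid hpn, filter_cons_nonid hqn,
        filter_cons_nonid hmn]
      rw [if_neg (by simp), if_neg (by simp)]
      have hchf : List.Chain' Link ((u.filter fun l => !(isIdL l)) ++
          p :: q :: v.filter fun l => !(isIdL l)) := by
        have := chain_filter_nonid hch
        rw [hfu, filter_cons_nonid hpn, filter_cons_nonid hqn] at this
        exact this
      exact mr_glueT (v.filter fun l => !(isIdL l)) q hq hqn
        (u.filter fun l => !(isIdL l)).length _ le_rfl p hp hpn hl hchf

theorem NF_ident (u v : List (Letter A)) (p : Letter A) (hpid : isIdL p = true)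
    (hch : List.Chain' Link (u ++ p :: v)) (hne : u ++ v ≠ []) :
    NF (u ++ p :: v) = NF (u ++ v) := by
  classical
  have hfu : ∀ w, ((u ++ w).filter fun l => !(isIdL l)) =
      ((u.filter fun l => !(isIdL l)) ++ w.filter fun l => !(isIdL l)) := by
    intro w; rw [List.filter_append]
  have hfeq : ((u ++ p :: v).filter fun l => !(isIdL l)) =
      (u ++ v).filter fun l => !(isIdL l) := by
    rw [hfu, hfu, filter_cons_id hpid]
  rw [NF, NF, hfeq]
  by_cases hemp : ((u ++ v).filter fun l => !(isIdL l)) = []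
  · rw [if_pos hemp, if_pos hemp]
    congr 1
    cases u with
    | cons a u => rfl
    | nil =>
      simp only [List.nil_append]
      simp only [List.nil_append] at hch hne hemp
      cases v with
      | nil => exact absurd rfl hne
      | cons z v' =>
        have hzid : isIdL z = true := by
          rw [List.filter_eq_nil_iff] at hemp
          have := hemp z (by simp)
          simpa using this
        have hlpz : Link p z := (List.isChain_cons_cons.1 hch).1
        simp only [List.headI]
        exact id_letters_eq hpid hzid hlpz
  · rw [if_neg hemp, if_neg hemp]

end Letters

section Glue
variable {E : Type u} {A : Type v} [DecidableEq E]

omit [DecidableEq E] in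
theorem iso_discrete_rev {P Q : Ipomset E A} (h : IpoIso P Q) (hd : Q.Discrete) :
    P.Discrete := by
  obtain ⟨f, hf⟩ := h
  intro x y hxy
  obtain ⟨hx, hy⟩ := P.lt_mem hxy
  exact hd _ _ ((hf.lt_iff x hx y hy).2 hxy)

theorem mergeS_core {l : List E} {lab : E → A} {sP sQ tQ tP : E → Bool}
    (h : ∀ x ∈ l, sQ x = false → sP x = false) :
    mergeS ((l.filter fun x => sQ x).map fun x => (lab x, sP x, tP x))
      (l.map fun x => (lab x, sQ x, tQ x)) =
      l.map fun x => (lab x, sP x, tQ x) := by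
  induction l with
  | nil => simp
  | cons x l ih =>
    have htl : ∀ y ∈ l, sQ y = false → sP y = false := fun y hy => h y (List.mem_cons_of_mem x hy)
    cases hx : sQ x with
    | true =>
      rw [List.filter_cons_of_pos (by rw [hx]), List.map_cons, List.map_cons, List.map_cons]
      rw [show ∀ (pp qq : Letter A), mergeS ((lab x, sP x, tP x) :: pp)
        ((lab x, sQ x, tQ x) :: qq) = (lab x, sP x, tQ x) :: mergeS pp qq from
        fun pp qq => by simp [mergeS, hx]]
      rw [ih htl]
    | false =>
      rw [List.filter_cons_of_neg (by rw [hx]; simp), List.map_cons, List.map_cons]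
      rw [mergeS_cons_false (e := (lab x, sQ x, tQ x)) (by rw [hx]) _ _]
      rw [ih htl, hx, h x List.mem_cons_self hx]

theorem mergeT_core (l : List E) (lab : E → A) (lab2 : E → A) (sP tP sQ tQ : E → Bool) :
    mergeT (l.map fun x => (lab x, sP x, tP x))
      ((l.filter fun x => tP x).map fun x => (lab2 x, sQ x, tQ x)) =
      l.map fun x => (lab x, sP x, tP x && tQ x) := by
  induction l with
  | nil => simp
  | cons x l ih =>
    cases hx : tP x with
    | true =>
      rw [List.filter_cons_of_pos (by rw [hx]), List.map_cons, List.map_cons, List.map_cons]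
      rw [show ∀ (pp qq : Letter A), mergeT ((lab x, sP x, tP x) :: pp)
        ((lab2 x, sQ x, tQ x) :: qq) = (lab x, sP x, tQ x) :: mergeT pp qq from
        fun pp qq => by simp [mergeT, hx]]
      rw [ih, hx, Bool.true_and]
    | false =>
      rw [List.filter_cons_of_neg (by rw [hx]; simp), List.map_cons, List.map_cons]
      rw [mergeT_cons_false (e := (lab x, sP x, tP x)) (by rw [hx]) _ _]
      rw [ih, hx, Bool.false_and]

theorem encode_glueOf_S {P' Q' R' : Ipomset E A} (hP' : P'.Starter) (hQ' : Q'.Starter)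
    (hG : IsGlueOf P' Q' R') : encode R' = mergeS (encode P') (encode Q') := by
  obtain ⟨⟨hif, hcap⟩, hev, hlt, hevo, hsrc, htgt, hlabP, hlabQ⟩ := hG
  have hPd : P'.Discrete := hP'.1
  have hQd : Q'.Discrete := hQ'.1
  have hIevents : P'.tgt = Q'.src := congrArg Conclist.events hif
  have hIevord : ∀ x y, (x ∈ P'.tgt ∧ y ∈ P'.tgt ∧ P'.evord x y) ↔
      (x ∈ Q'.src ∧ y ∈ Q'.src ∧ Q'.evord x y) := fun x y =>
    iff_of_eq (congrFun (congrFun (congrArg Conclist.evord hif) x) y)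
  have hIlab : ∀ x, (if x ∈ P'.tgt then some (P'.lab x) else none) =
      (if x ∈ Q'.src then some (Q'.lab x) else none) := fun x =>
    congrFun (congrArg Conclist.lab hif) x
  have hPE : P'.events = Q'.src := hP'.2 ▸ hIevents
  have hsubPQ : P'.events ⊆ Q'.events := hPE ▸ Q'.src_sub
  have hRE : R'.events = Q'.events := by
    rw [hev]; exact Finset.union_eq_right.2 hsubPQ
  have hPQevord : ∀ x y, P'.evord x y → Q'.evord x y := by
    intro x y h
    obtain ⟨hx, hy⟩ := P'.evord_mem h
    exact ((hIevord x y).1 ⟨hP'.2 ▸ hx, hP'.2 ▸ hy, h⟩).2.2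
  have hQPevord : ∀ x y, x ∈ Q'.src → y ∈ Q'.src → Q'.evord x y → P'.evord x y := by
    intro x y hx hy h
    exact ((hIevord x y).2 ⟨hx, hy, h⟩).2.2
  have hstep : ∀ a b, ¬ glueStep P' Q' a b := by
    rintro a b (h | h | ⟨ha, hna, _, _⟩)
    · exact hPd _ _ h
    · exact hQd _ _ h
    · exact hna (hP'.2 ▸ ha)
  have hRd : R'.Discrete := by
    intro x y hxy
    have h2 := (hlt x y).1 hxy
    induction h2 with
    | single h => exact hstep _ _ h
    | tail _ h _ => exact hstep _ _ h
  have hRQevord : ∀ x y, R'.evord x y ↔ Q'.evord x y := by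
    intro x y
    rw [hevo]
    constructor
    · rintro (h | h)
      · exact hPQevord x y h
      · exact h
    · exact fun h => Or.inr h
  set l := sortedEvents Q' with hldef
  have hspecQ := sortedEvents_spec hQd
  have hmeml : ∀ x ∈ l, x ∈ Q'.events := fun x hx => (mem_sortedEvents hQd).1 hx
  have hsortR : sortedEvents R' = l := by
    refine sortedEvents_eq hRd ⟨?_, hspecQ.2.1, ?_⟩
    · rw [hspecQ.1, hRE]
    · exact hspecQ.2.2.imp fun h => (hRQevord _ _).2 h
  have hsortP : sortedEvents P' = l.filter fun x => decide (x ∈ Q'.src) := by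
    refine sortedEvents_eq hPd ⟨?_, hspecQ.2.1.filter _, ?_⟩
    · ext x
      simp only [List.mem_toFinset, List.mem_filter]
      constructor
      · rintro ⟨hx, hx'⟩
        exact hPE ▸ (of_decide_eq_true hx' : x ∈ Q'.src)
      · intro hx
        refine ⟨(mem_sortedEvents hQd).2 (hsubPQ hx), decide_eq_true ?_⟩
        exact hPE ▸ hx
    · refine (hspecQ.2.2.filter _).imp_of_mem fun {a b} ha hb hab => ?_
      exact hQPevord a b (of_decide_eq_true ((List.mem_filter.1 ha).2))
        (of_decide_eq_true ((List.mem_filter.1 hb).2)) hab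
  have hlabeq : ∀ x ∈ Q'.src, P'.lab x = Q'.lab x := by
    intro x hx
    have := hIlab x
    rw [if_pos (show x ∈ P'.tgt from hIevents ▸ hx), if_pos hx] at this
    exact Option.some.inj this
  have hR : encode R' = l.map fun x =>
      (Q'.lab x, decide (x ∈ P'.src), decide (x ∈ Q'.tgt)) := by
    rw [encode, hsortR]
    refine List.map_congr_left fun x hx => ?_
    rw [hlabQ x (hmeml x hx), hsrc, htgt]
  have hP2 : encode P' = (l.filter fun x => decide (x ∈ Q'.src)).map fun x =>
      (Q'.lab x, decide (x ∈ P'.src), decide (x ∈ P'.tgt)) := by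
    rw [encode, hsortP]
    refine List.map_congr_left fun x hx => ?_
    rw [hlabeq x (of_decide_eq_true ((List.mem_filter.1 hx).2))]
  have hQ2 : encode Q' = l.map fun x =>
      (Q'.lab x, decide (x ∈ Q'.src), decide (x ∈ Q'.tgt)) := by
    rw [encode]
  rw [hR, hP2, hQ2]
  refine (mergeS_core fun x hx hxf => ?_).symm
  have : x ∉ Q'.src := fun hc => by rw [decide_eq_true hc] at hxf; simp at hxf
  have : x ∉ P'.src := fun hc => this (hPE ▸ P'.src_sub hc)
  exact decide_eq_false this

theorem encode_glueOf_T {P' Q' R' : Ipomset E A} (hP' : P'.Terminator) (hQ' : Q'.Terminator)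
    (hG : IsGlueOf P' Q' R') : encode R' = mergeT (encode P') (encode Q') := by
  obtain ⟨⟨hif, hcap⟩, hev, hlt, hevo, hsrc, htgt, hlabP, hlabQ⟩ := hG
  have hPd : P'.Discrete := hP'.1
  have hQd : Q'.Discrete := hQ'.1
  have hIevents : P'.tgt = Q'.src := congrArg Conclist.events hif
  have hIevord : ∀ x y, (x ∈ P'.tgt ∧ y ∈ P'.tgt ∧ P'.evord x y) ↔
      (x ∈ Q'.src ∧ y ∈ Q'.src ∧ Q'.evord x y) := fun x y =>
    iff_of_eq (congrFun (congrFun (congrArg Conclist.evord hif) x) y)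
  have hIlab : ∀ x, (if x ∈ P'.tgt then some (P'.lab x) else none) =
      (if x ∈ Q'.src then some (Q'.lab x) else none) := fun x =>
    congrFun (congrArg Conclist.lab hif) x
  have hQE : Q'.events = P'.tgt := by rw [hIevents, hQ'.2]
  have hsubQP : Q'.events ⊆ P'.events := hQE ▸ P'.tgt_sub
  have hRE : R'.events = P'.events := by
    rw [hev]; exact Finset.union_eq_left.2 hsubQP
  have hQPevord : ∀ x y, Q'.evord x y → P'.evord x y := by
    intro x y h
    obtain ⟨hx, hy⟩ := Q'.evord_mem h
    exact ((hIevord x y).2 ⟨hQ'.2 ▸ hx, hQ'.2 ▸ hy, h⟩).2.2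
  have hPQevord : ∀ x y, x ∈ P'.tgt → y ∈ P'.tgt → P'.evord x y → Q'.evord x y := by
    intro x y hx hy h
    exact ((hIevord x y).1 ⟨hx, hy, h⟩).2.2
  have hstep : ∀ a b, ¬ glueStep P' Q' a b := by
    rintro a b (h | h | ⟨_, _, hb, hnb⟩)
    · exact hPd _ _ h
    · exact hQd _ _ h
    · exact hnb (hQ'.2 ▸ hb)
  have hRd : R'.Discrete := by
    intro x y hxy
    have h2 := (hlt x y).1 hxy
    induction h2 with
    | single h => exact hstep _ _ h
    | tail _ h _ => exact hstep _ _ h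
  have hRPevord : ∀ x y, R'.evord x y ↔ P'.evord x y := by
    intro x y
    rw [hevo]
    constructor
    · rintro (h | h)
      · exact h
      · exact hQPevord x y h
    · exact fun h => Or.inl h
  set l := sortedEvents P' with hldef
  have hspecP := sortedEvents_spec hPd
  have hmeml : ∀ x ∈ l, x ∈ P'.events := fun x hx => (mem_sortedEvents hPd).1 hx
  have hsortR : sortedEvents R' = l := by
    refine sortedEvents_eq hRd ⟨?_, hspecP.2.1, ?_⟩
    · rw [hspecP.1, hRE]
    · exact hspecP.2.2.imp fun h => (hRPevord _ _).2 h
  have hsortQ : sortedEvents Q' = l.filter fun x => decide (x ∈ P'.tgt) := by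
    refine sortedEvents_eq hQd ⟨?_, hspecP.2.1.filter _, ?_⟩
    · ext x
      simp only [List.mem_toFinset, List.mem_filter]
      constructor
      · rintro ⟨hx, hx'⟩
        exact hQE ▸ (of_decide_eq_true hx' : x ∈ P'.tgt)
      · intro hx
        refine ⟨(mem_sortedEvents hPd).2 (hsubQP hx), decide_eq_true ?_⟩
        exact hQE ▸ hx
    · refine (hspecP.2.2.filter _).imp_of_mem fun {a b} ha hb hab => ?_
      exact hPQevord a b (of_decide_eq_true ((List.mem_filter.1 ha).2))
        (of_decide_eq_true ((List.mem_filter.1 hb).2)) hab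
  have hlabeq : ∀ x ∈ P'.tgt, Q'.lab x = P'.lab x := by
    intro x hx
    have := hIlab x
    rw [if_pos hx, if_pos (show x ∈ Q'.src from hIevents ▸ hx)] at this
    exact (Option.some.inj this).symm
  have hR : encode R' = l.map fun x =>
      (P'.lab x, decide (x ∈ P'.src), decide (x ∈ Q'.tgt)) := by
    rw [encode, hsortR]
    refine List.map_congr_left fun x hx => ?_
    rw [hlabP x (hmeml x hx), hsrc, htgt]
  have hP2 : encode P' = l.map fun x =>
      (P'.lab x, decide (x ∈ P'.src), decide (x ∈ P'.tgt)) := by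
    rw [encode]
  have hQ2 : encode Q' = (l.filter fun x => decide (x ∈ P'.tgt)).map fun x =>
      (Q'.lab x, decide (x ∈ Q'.src), decide (x ∈ Q'.tgt)) := by
    rw [encode, hsortQ]
  rw [hR, hP2, hQ2]
  rw [mergeT_core l P'.lab Q'.lab _ _ _ _]
  refine List.map_congr_left fun x hx => ?_
  by_cases hxt : x ∈ P'.tgt
  · rw [decide_eq_true hxt, Bool.true_and]
  · have hx2 : x ∉ Q'.tgt := fun hc => hxt (hQE ▸ Q'.tgt_sub hc)
    rw [decide_eq_false hxt, decide_eq_false hx2, Bool.false_and]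

theorem encode_gluing_S {P Q R : Ipomset E A} (hP : P.Starter) (hQ : Q.Starter)
    (hG : IsGluing P Q R) : encode R = mergeS (encode P) (encode Q) := by
  obtain ⟨P', Q', R', hiP, hiQ, hiR, hGO⟩ := hG
  have hP' := iso_starter hiP hP
  have hQ' := iso_starter hiQ hQ
  have hcore := encode_glueOf_S hP' hQ' hGO
  have hRd : R'.Discrete := by
    intro x y hxy
    have h2 := (hGO.2.2.1 x y).1 hxy
    have hstep : ∀ a b, ¬ glueStep P' Q' a b := by
      rintro a b (h | h | ⟨ha, hna, _, _⟩)
      · exact hP'.1 _ _ h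
      · exact hQ'.1 _ _ h
      · exact hna (hP'.2 ▸ ha)
    induction h2 with
    | single h => exact hstep _ _ h
    | tail _ h _ => exact hstep _ _ h
  rw [← encode_iso hiP hP.1, ← encode_iso hiQ hQ.1, ← hcore]
  exact (encode_iso hiR (iso_discrete_rev hiR hRd)).symm

theorem encode_gluing_T {P Q R : Ipomset E A} (hP : P.Terminator) (hQ : Q.Terminator)
    (hG : IsGluing P Q R) : encode R = mergeT (encode P) (encode Q) := by
  obtain ⟨P', Q', R', hiP, hiQ, hiR, hGO⟩ := hG
  have hP' := iso_terminator hiP hP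
  have hQ' := iso_terminator hiQ hQ
  have hcore := encode_glueOf_T hP' hQ' hGO
  have hRd : R'.Discrete := by
    intro x y hxy
    have h2 := (hGO.2.2.1 x y).1 hxy
    have hstep : ∀ a b, ¬ glueStep P' Q' a b := by
      rintro a b (h | h | ⟨_, _, hb, hnb⟩)
      · exact hP'.1 _ _ h
      · exact hQ'.1 _ _ h
      · exact hnb (hQ'.2 ▸ hb)
    induction h2 with
    | single h => exact hstep _ _ h
    | tail _ h _ => exact hstep _ _ h
  rw [← encode_iso hiP hP.1, ← encode_iso hiQ hQ.1, ← hcore]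
  exact (encode_iso hiR (iso_discrete_rev hiR hRd)).symm


omit [DecidableEq E] in
theorem stepLetter_discrete {P : Ipomset E A} (h : StepLetter P) : P.Discrete :=
  h.elim And.left And.left

theorem coherent_tail {P : Ipomset E A} {w : List (Ipomset E A)} (h : Coherent (P :: w)) :
    Coherent w :=
  ⟨fun Q hQ => h.1 Q (List.mem_cons_of_mem _ hQ), (List.isChain_cons.1 h.2).2⟩

theorem coherent_chain_link : ∀ w : List (Ipomset E A), Coherent w →
    List.Chain' Link (w.map encode)
  | [], _ => List.isChain_nil
  | [P], _ => by simp [List.Chain']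
  | P :: Q :: w, h => by
    have hd1 : P.Discrete := stepLetter_discrete (h.1 P (by simp))
    have hd2 : Q.Discrete := stepLetter_discrete (h.1 Q (by simp))
    have hlink : Link (encode P) (encode Q) :=
      clIso_transfer hd1 hd2 (List.isChain_cons_cons.1 h.2).1
    simp only [List.map_cons]
    refine List.isChain_cons_cons.2 ⟨hlink, ?_⟩
    have := coherent_chain_link (Q :: w) (coherent_tail h)
    simpa [List.Chain'] using this

theorem chain'_middle {α : Type*} {R : α → α → Prop} {u v : List α} {a b : α}
    (h : List.Chain' R (u ++ a :: b :: v)) : R a b :=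
  (List.isChain_cons_cons.1 ((List.isChain_append.1 h).2.1)).1

theorem stepEquiv_NF {w₁ w₂ : List (Ipomset E A)} (h : StepEquiv w₁ w₂) :
    NF (w₁.map encode) = NF (w₂.map encode) := by
  induction h with
  | glue u v P Q R hco htype hglue =>
    have hch := coherent_chain_link _ hco
    simp only [List.map_append, List.map_cons] at hch ⊢
    have hlink : Link (encode P) (encode Q) := chain'_middle hch
    rcases htype with ⟨hP, hQ⟩ | ⟨hP, hQ⟩
    · rw [encode_gluing_S hP hQ hglue]
      exact NF_glueS _ _ _ _ (encode_isS hP) (encode_isS hQ) hlink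
    · rw [encode_gluing_T hP hQ hglue]
      exact NF_glueT _ _ _ _ (encode_isT hP) (encode_isT hQ) hlink hch
  | ident u v P hco hid hne =>
    have hch := coherent_chain_link _ hco
    simp only [List.map_append, List.map_cons] at hch ⊢
    refine NF_ident _ _ _ ((isIdL_encode hid.1).2 hid) hch ?_
    intro hc
    apply hne
    rcases List.append_eq_nil_iff.1 hc with ⟨h1, h2⟩
    rw [List.map_eq_nil_iff] at h1 h2
    rw [h1, h2]
    rfl
  | iso u v P Q hco hiso =>
    have hd : P.Discrete := stepLetter_discrete (hco.1 P (by simp))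
    simp only [List.map_append, List.map_cons]
    rw [encode_iso hiso hd]
  | refl w => rfl
  | symm _ ih => exact ih.symm
  | trans _ _ ih1 ih2 => exact ih1.trans ih2

end Glue

section Exist
variable {E : Type u} {A : Type v} [DecidableEq E]

omit [DecidableEq E] in
theorem conclist_ext {U V : Conclist E A} (h1 : U.events = V.events)
    (h2 : U.evord = V.evord) (h3 : U.lab = V.lab) : U = V := by
  cases U; cases V
  dsimp at h1 h2 h3
  subst h1; subst h2; subst h3
  rfl

omit [DecidableEq E] in
theorem clIso_refl (U : Conclist E A) : ClIso U U :=
  ⟨id, ⟨fun x hx => hx, fun x _ y _ h => h, fun y hy => ⟨y, hy, rfl⟩, fun x _ => rfl,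
    fun x _ y _ => Iff.rfl⟩⟩

omit [DecidableEq E] in
theorem clIso_trans {U V W : Conclist E A} (h1 : ClIso U V) (h2 : ClIso V W) : ClIso U W := by
  obtain ⟨f, hf⟩ := h1
  obtain ⟨g, hg⟩ := h2
  refine ⟨g ∘ f, ⟨?_, ?_, ?_, ?_, ?_⟩⟩
  · exact fun x hx => hg.maps _ (hf.maps x hx)
  · exact fun x hx y hy h =>
      hf.inj x hx y hy (hg.inj _ (hf.maps x hx) _ (hf.maps y hy) h)
  · intro z hz
    obtain ⟨y, hy, rfl⟩ := hg.surj z hz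
    obtain ⟨x, hx, rfl⟩ := hf.surj y hy
    exact ⟨x, hx, rfl⟩
  · intro x hx
    rw [Function.comp, hg.lab_eq _ (hf.maps x hx), hf.lab_eq x hx]
  · intro x hx y hy
    rw [hf.evord_iff x hx y hy, hg.evord_iff _ (hf.maps x hx) _ (hf.maps y hy)]
    exact Iff.rfl

theorem glue_starters {P Q : Ipomset E A} (hP : P.Starter) (hQ : Q.Starter)
    (hiso : ClIso P.tgtIface Q.srcIface) :
    ∃ R : Ipomset E A, IsGluing P Q R ∧ R.Starter ∧
      ClIso P.srcIface R.srcIface ∧ R.tgtIface = Q.tgtIface := by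
  obtain ⟨f, hf⟩ := hiso
  have hPE : ∀ x, x ∈ P.events ↔ x ∈ P.tgt := fun x => by rw [hP.2]
  have hQE : ∀ x, x ∈ Q.events ↔ x ∈ Q.tgt := fun x => by rw [hQ.2]
  have hmaps : ∀ x ∈ P.events, f x ∈ Q.src := fun x hx => hf.maps x ((hPE x).1 hx)
  have hlabf : ∀ x ∈ P.events, Q.lab (f x) = P.lab x := by
    intro x hx
    have := hf.lab_eq x ((hPE x).1 hx)
    simp only [Ipomset.srcIface, Ipomset.tgtIface] at this
    rw [if_pos (hmaps x hx), if_pos ((hPE x).1 hx)] at this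
    exact Option.some.inj this
  have hinj : ∀ x ∈ P.events, ∀ y ∈ P.events, f x = f y → x = y := fun x hx y hy h =>
    hf.inj x ((hPE x).1 hx) y ((hPE y).1 hy) h
  have hsurj : ∀ y ∈ Q.src, ∃ x ∈ P.events, f x = y := by
    intro y hy
    obtain ⟨x, hx, rfl⟩ := hf.surj y hy
    exact ⟨x, (hPE x).2 hx, rfl⟩
  have hevf : ∀ x ∈ P.events, ∀ y ∈ P.events,
      (P.evord x y ↔ (f x ∈ Q.src ∧ f y ∈ Q.src ∧ Q.evord (f x) (f y))) := by
    intro x hx y hy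
    have := hf.evord_iff x ((hPE x).1 hx) y ((hPE y).1 hy)
    simp only [Ipomset.srcIface, Ipomset.tgtIface] at this
    constructor
    · intro h
      exact this.1 ⟨(hPE x).1 hx, (hPE y).1 hy, h⟩
    · intro h
      exact (this.2 h).2.2
  have hsrcim : P.src.image f ⊆ Q.src := by
    intro y hy
    obtain ⟨a, ha, rfl⟩ := Finset.mem_image.1 hy
    exact hmaps a (P.src_sub ha)
  refine ⟨{
    events := Q.events
    lt := fun _ _ => False
    evord := Q.evord
    src := P.src.image f
    tgt := Q.tgt
    lab := Q.lab
    lt_mem := False.elim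
    evord_mem := Q.evord_mem
    lt_irrefl := fun _ h => h
    lt_trans := fun h => h.elim
    evord_irrefl := Q.evord_irrefl
    evord_trans := Q.evord_trans
    order_total := fun {x y} hx hy hxy => by
      rcases Q.order_total hx hy hxy with h | h | h | h
      · exact absurd h (hQ.1 _ _)
      · exact absurd h (hQ.1 _ _)
      · exact Or.inr (Or.inr (Or.inl h))
      · exact Or.inr (Or.inr (Or.inr h))
    src_sub := fun {x} hx => Q.src_sub (hsrcim hx)
    tgt_sub := Q.tgt_sub
    src_min := fun _ h => h
    tgt_max := fun _ h => h }, ?_, ?_, ?_, ?_⟩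
  · -- IsGluing
    refine ⟨{
      events := Q.src
      lt := fun _ _ => False
      evord := fun x y => x ∈ Q.src ∧ y ∈ Q.src ∧ Q.evord x y
      src := P.src.image f
      tgt := Q.src
      lab := Q.lab
      lt_mem := False.elim
      evord_mem := fun h => ⟨h.1, h.2.1⟩
      lt_irrefl := fun _ h => h
      lt_trans := fun h => h.elim
      evord_irrefl := fun x h => Q.evord_irrefl x h.2.2
      evord_trans := fun h1 h2 => ⟨h1.1, h2.2.1, Q.evord_trans h1.2.2 h2.2.2⟩
      order_total := fun {x y} hx hy hxy => by
        rcases Q.order_total (Q.src_sub hx) (Q.src_sub hy) hxy with h | h | h | h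
        · exact absurd h (hQ.1 _ _)
        · exact absurd h (hQ.1 _ _)
        · exact Or.inr (Or.inr (Or.inl ⟨hx, hy, h⟩))
        · exact Or.inr (Or.inr (Or.inr ⟨hy, hx, h⟩))
      src_sub := hsrcim
      tgt_sub := Finset.Subset.refl _
      src_min := fun _ h => h
      tgt_max := fun _ h => h }, Q, _, ⟨f, ?_⟩, ipoIso_refl Q, ipoIso_refl _, ?_⟩
    · -- IpoIso P P''
      refine ⟨hmaps, hinj, hsurj, ?_, ?_, ?_, ?_, ?_⟩
      · intro x hx
        constructor
        · exact fun h => Finset.mem_image_of_mem f h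
        · intro h
          obtain ⟨b, hb, hbe⟩ := Finset.mem_image.1 h
          rwa [← hinj b (P.src_sub hb) x hx hbe]
      · exact fun x hx => ⟨fun _ => hmaps x hx, fun _ => (hPE x).1 hx⟩
      · exact fun x hx => hlabf x hx
      · exact fun x hx y hy => ⟨fun h => h.elim, fun h => absurd h (hP.1 _ _)⟩
      · intro x hx y hy _ _
        exact hevf x hx y hy
    · -- IsGlueOf
      refine ⟨⟨?_, ?_⟩, ?_, ?_, ?_, rfl, rfl, fun x _ => rfl, fun x _ => rfl⟩
      · refine conclist_ext rfl ?_ rfl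
        funext x y
        simp only [Ipomset.srcIface, Ipomset.tgtIface]
        refine propext ⟨fun h => ⟨h.1, h.2.1, h.2.2.2.2⟩,
          fun h => ⟨h.1, h.2.1, h.1, h.2.1, h.2.2⟩⟩
      · exact Finset.inter_eq_left.2 Q.src_sub
      · exact (Finset.union_eq_right.2 Q.src_sub).symm
      · intro x y
        constructor
        · exact fun h => h.elim
        · intro h
          induction h with
          | single h' =>
            rcases h' with h' | h' | ⟨ha, hna, _, _⟩
            · exact h'
            · exact hQ.1 _ _ h'
            · exact hna ha
          | tail _ h' _ =>
            rcases h' with h' | h' | ⟨ha, hna, _, _⟩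
            · exact h'
            · exact hQ.1 _ _ h'
            · exact hna ha
      · intro x y
        constructor
        · exact fun h => Or.inr h
        · rintro (h | h)
          · exact h.2.2
          · exact h
  · exact ⟨fun _ _ h => h, hQ.2⟩
  · -- ClIso P.srcIface R.srcIface
    refine ⟨f, ⟨?_, ?_, ?_, ?_, ?_⟩⟩
    · exact fun x hx => Finset.mem_image_of_mem f hx
    · exact fun x hx y hy h => hinj x (P.src_sub hx) y (P.src_sub hy) h
    · intro y hy
      obtain ⟨a, ha, rfl⟩ := Finset.mem_image.1 hy
      exact ⟨a, ha, rfl⟩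
    · intro x hx
      have hx' : x ∈ P.src := hx
      simp only [Ipomset.srcIface]
      rw [if_pos (Finset.mem_image_of_mem f hx'), if_pos hx', hlabf x (P.src_sub hx')]
    · intro x hx y hy
      simp only [Ipomset.srcIface]
      constructor
      · intro h
        exact ⟨Finset.mem_image_of_mem f h.1, Finset.mem_image_of_mem f h.2.1,
          ((hevf x (P.src_sub hx) y (P.src_sub hy)).1 h.2.2).2.2⟩
      · intro h
        refine ⟨hx, hy, ?_⟩
        exact (hevf x (P.src_sub hx) y (P.src_sub hy)).2
          ⟨hmaps x (P.src_sub hx), hmaps y (P.src_sub hy), h.2.2⟩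
  · rfl

theorem glue_terminators {P Q : Ipomset E A} (hP : P.Terminator) (hQ : Q.Terminator)
    (hiso : ClIso P.tgtIface Q.srcIface) :
    ∃ R : Ipomset E A, IsGluing P Q R ∧ R.Terminator ∧
      R.srcIface = P.srcIface ∧ ClIso R.tgtIface Q.tgtIface := by
  classical
  obtain ⟨f, hf⟩ := hiso
  have hQE : ∀ y, y ∈ Q.events ↔ y ∈ Q.src := fun y => by rw [hQ.2]
  set g : E → E := fun y => if h : ∃ x ∈ P.tgt, f x = y then h.choose else y with hgdef
  have hg : ∀ y ∈ Q.src, g y ∈ P.tgt ∧ f (g y) = y := by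
    intro y hy
    obtain ⟨x, hx, hfx⟩ := hf.surj y hy
    have hex : ∃ x ∈ P.tgt, f x = y := ⟨x, hx, hfx⟩
    rw [hgdef]
    simp only [dif_pos hex]
    exact ⟨hex.choose_spec.1, hex.choose_spec.2⟩
  have hgf : ∀ x ∈ P.tgt, g (f x) = x := by
    intro x hx
    have hfx : f x ∈ Q.src := hf.maps x hx
    have := hg (f x) hfx
    exact hf.inj _ this.1 x hx this.2
  have hginj : ∀ y1 ∈ Q.src, ∀ y2 ∈ Q.src, g y1 = g y2 → y1 = y2 := by
    intro y1 h1 y2 h2 h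
    have e1 := (hg y1 h1).2
    have e2 := (hg y2 h2).2
    rw [← e1, ← e2, h]
  have hlabg : ∀ y ∈ Q.src, P.lab (g y) = Q.lab y := by
    intro y hy
    have := hf.lab_eq (g y) (hg y hy).1
    simp only [Ipomset.srcIface, Ipomset.tgtIface] at this
    rw [(hg y hy).2, if_pos hy, if_pos (hg y hy).1] at this
    exact (Option.some.inj this).symm
  have hevg : ∀ y1 ∈ Q.src, ∀ y2 ∈ Q.src,
      (Q.evord y1 y2 ↔ g y1 ∈ P.tgt ∧ g y2 ∈ P.tgt ∧ P.evord (g y1) (g y2)) := by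
    intro y1 h1 y2 h2
    have := hf.evord_iff (g y1) (hg y1 h1).1 (g y2) (hg y2 h2).1
    simp only [Ipomset.srcIface, Ipomset.tgtIface] at this
    rw [(hg y1 h1).2, (hg y2 h2).2] at this
    constructor
    · intro h
      exact this.2 ⟨h1, h2, h⟩
    · intro h
      exact (this.1 h).2.2
  have htgtim : Q.tgt.image g ⊆ P.tgt := by
    intro x hx
    obtain ⟨y, hy, rfl⟩ := Finset.mem_image.1 hx
    exact (hg y ((hQE y).1 (Q.tgt_sub hy))).1
  refine ⟨{
    events := P.events
    lt := fun _ _ => False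
    evord := P.evord
    src := P.src
    tgt := Q.tgt.image g
    lab := P.lab
    lt_mem := False.elim
    evord_mem := P.evord_mem
    lt_irrefl := fun _ h => h
    lt_trans := fun h => h.elim
    evord_irrefl := P.evord_irrefl
    evord_trans := P.evord_trans
    order_total := fun {x y} hx hy hxy => by
      rcases P.order_total hx hy hxy with h | h | h | h
      · exact absurd h (hP.1 _ _)
      · exact absurd h (hP.1 _ _)
      · exact Or.inr (Or.inr (Or.inl h))
      · exact Or.inr (Or.inr (Or.inr h))
    src_sub := P.src_sub
    tgt_sub := fun {x} hx => P.tgt_sub (htgtim hx)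
    src_min := fun _ h => h
    tgt_max := fun _ h => h }, ?_, ?_, rfl, ?_⟩
  · -- IsGluing
    refine ⟨P, {
      events := P.tgt
      lt := fun _ _ => False
      evord := fun x y => x ∈ P.tgt ∧ y ∈ P.tgt ∧ P.evord x y
      src := P.tgt
      tgt := Q.tgt.image g
      lab := P.lab
      lt_mem := False.elim
      evord_mem := fun h => ⟨h.1, h.2.1⟩
      lt_irrefl := fun _ h => h
      lt_trans := fun h => h.elim
      evord_irrefl := fun x h => P.evord_irrefl x h.2.2
      evord_trans := fun h1 h2 => ⟨h1.1, h2.2.1, P.evord_trans h1.2.2 h2.2.2⟩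
      order_total := fun {x y} hx hy hxy => by
        rcases P.order_total (P.tgt_sub hx) (P.tgt_sub hy) hxy with h | h | h | h
        · exact absurd h (hP.1 _ _)
        · exact absurd h (hP.1 _ _)
        · exact Or.inr (Or.inr (Or.inl ⟨hx, hy, h⟩))
        · exact Or.inr (Or.inr (Or.inr ⟨hy, hx, h⟩))
      src_sub := Finset.Subset.refl _
      tgt_sub := htgtim
      src_min := fun _ h => h
      tgt_max := fun _ h => h }, _, ipoIso_refl P, ⟨g, ?_⟩, ipoIso_refl _, ?_⟩
    · -- IpoIso Q Q''
      refine ⟨?_, ?_, ?_, ?_, ?_, ?_, ?_, ?_⟩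
      · exact fun y hy => (hg y ((hQE y).1 hy)).1
      · exact fun y1 h1 y2 h2 h => hginj y1 ((hQE y1).1 h1) y2 ((hQE y2).1 h2) h
      · intro x hx
        refine ⟨f x, (hQE (f x)).2 (hf.maps x hx), hgf x hx⟩
      · exact fun y hy => ⟨fun _ => (hg y ((hQE y).1 hy)).1, fun _ => (hQE y).1 hy⟩
      · intro y hy
        constructor
        · exact fun h => Finset.mem_image_of_mem g h
        · intro h
          obtain ⟨z, hz, hze⟩ := Finset.mem_image.1 h
          rwa [← hginj z ((hQE z).1 (Q.tgt_sub hz)) y ((hQE y).1 hy) hze]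
      · exact fun y hy => hlabg y ((hQE y).1 hy)
      · exact fun y1 h1 y2 h2 => ⟨fun h => h.elim, fun h => absurd h (hQ.1 _ _)⟩
      · intro y1 h1 y2 h2 _ _
        exact hevg y1 ((hQE y1).1 h1) y2 ((hQE y2).1 h2)
    · -- IsGlueOf
      refine ⟨⟨?_, ?_⟩, ?_, ?_, ?_, rfl, rfl, fun x _ => rfl, fun x _ => rfl⟩
      · refine conclist_ext rfl ?_ rfl
        funext x y
        simp only [Ipomset.srcIface, Ipomset.tgtIface]
        refine propext ⟨fun h => ⟨h.1, h.2.1, h.1, h.2.1, h.2.2⟩,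
          fun h => ⟨h.1, h.2.1, h.2.2.2.2⟩⟩
      · exact Finset.inter_eq_right.2 P.tgt_sub
      · exact (Finset.union_eq_left.2 P.tgt_sub).symm
      · intro x y
        constructor
        · exact fun h => h.elim
        · intro h
          induction h with
          | single h' =>
            rcases h' with h' | h' | ⟨_, _, hb, hnb⟩
            · exact hP.1 _ _ h'
            · exact h'
            · exact hnb hb
          | tail _ h' _ =>
            rcases h' with h' | h' | ⟨_, _, hb, hnb⟩
            · exact hP.1 _ _ h'
            · exact h'
            · exact hnb hb
      · intro x y
        constructor
        · exact fun h => Or.inl h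
        · rintro (h | h)
          · exact h
          · exact h.2.2
  · exact ⟨fun _ _ h => h, hP.2⟩
  · -- ClIso R.tgtIface Q.tgtIface
    refine ⟨f, ⟨?_, ?_, ?_, ?_, ?_⟩⟩
    · intro x hx
      obtain ⟨y, hy, rfl⟩ := Finset.mem_image.1 (show x ∈ Q.tgt.image g from hx)
      have : f (g y) = y := (hg y ((hQE y).1 (Q.tgt_sub hy))).2
      rw [this]
      exact hy
    · intro x1 h1 x2 h2 h
      exact hf.inj x1 (htgtim h1) x2 (htgtim h2) h
    · intro y hy
      refine ⟨g y, Finset.mem_image_of_mem g hy, (hg y ((hQE y).1 (Q.tgt_sub hy))).2⟩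
    · intro x hx
      have hx' : x ∈ Q.tgt.image g := hx
      obtain ⟨y, hy, rfl⟩ := Finset.mem_image.1 hx'
      have hfy : f (g y) = y := (hg y ((hQE y).1 (Q.tgt_sub hy))).2
      simp only [Ipomset.tgtIface]
      rw [hfy, if_pos hy, if_pos hx', hlabg y ((hQE y).1 (Q.tgt_sub hy))]
    · intro x1 h1 x2 h2
      have h1' : x1 ∈ Q.tgt.image g := h1
      have h2' : x2 ∈ Q.tgt.image g := h2
      obtain ⟨y1, hy1, rfl⟩ := Finset.mem_image.1 h1'
      obtain ⟨y2, hy2, rfl⟩ := Finset.mem_image.1 h2'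
      have hs1 : y1 ∈ Q.src := (hQE y1).1 (Q.tgt_sub hy1)
      have hs2 : y2 ∈ Q.src := (hQE y2).1 (Q.tgt_sub hy2)
      have hfy1 : f (g y1) = y1 := (hg y1 hs1).2
      have hfy2 : f (g y2) = y2 := (hg y2 hs2).2
      simp only [Ipomset.tgtIface]
      rw [hfy1, hfy2]
      constructor
      · intro h
        exact ⟨hy1, hy2, ((hevg y1 hs1 y2 hs2).2 ⟨(hg y1 hs1).1, (hg y2 hs2).1, h.2.2⟩)⟩
      · intro h
        exact ⟨h1', h2', ((hevg y1 hs1 y2 hs2).1 h.2.2).2.2⟩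

theorem coherent_glue {u v : List (Ipomset E A)} {P Q R : Ipomset E A}
    (hco : Coherent (u ++ P :: Q :: v)) (hR : StepLetter R)
    (h1 : ClIso P.srcIface R.srcIface) (h2 : ClIso R.tgtIface Q.tgtIface) :
    Coherent (u ++ R :: v) := by
  obtain ⟨hmem, hch⟩ := hco
  rw [List.Chain', List.isChain_append] at hch
  obtain ⟨hchu, hchPQ, hbound⟩ := hch
  have hchQv := (List.isChain_cons_cons.1 hchPQ).2
  have hchv := (List.isChain_cons.1 hchQv).2
  have hQv := (List.isChain_cons.1 hchQv).1
  constructor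
  · intro X hX
    rcases List.mem_append.1 hX with h | h
    · exact hmem X (List.mem_append.2 (Or.inl h))
    · rcases List.mem_cons.1 h with rfl | h
      · exact hR
      · exact hmem X (List.mem_append.2 (Or.inr (by simp [h])))
  · rw [List.Chain', List.isChain_append]
    refine ⟨hchu, ?_, ?_⟩
    · refine List.isChain_cons.2 ⟨?_, hchv⟩
      intro z hz
      exact clIso_trans h2 (hQv z hz)
    · intro x hx y hy
      simp only [List.head?_cons, Option.mem_some_iff] at hy
      subst hy
      have := hbound x hx P (by simp)
      exact clIso_trans this h1

theorem split_or_chain {α : Type*} (Rl : α → α → Prop) :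
    ∀ w : List α, (∃ u a b v, w = u ++ a :: b :: v ∧ Rl a b) ∨ w.Chain' fun a b => ¬ Rl a b
  | [] => Or.inr List.isChain_nil
  | [x] => Or.inr (List.isChain_singleton x)
  | a :: b :: w => by
    classical
    by_cases h : Rl a b
    · exact Or.inl ⟨[], a, b, w, rfl, h⟩
    · rcases split_or_chain Rl (b :: w) with ⟨u, x, y, v, heq, hr⟩ | hch
      · exact Or.inl ⟨a :: u, x, y, v, by rw [List.cons_append, heq], hr⟩
      · exact Or.inr (List.isChain_cons_cons.2 ⟨h, hch⟩)

def sameType (P Q : Ipomset E A) : Prop :=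
  (P.Starter ∧ Q.Starter) ∨ (P.Terminator ∧ Q.Terminator)

omit [DecidableEq E] in
theorem not_id_pair {P Q : Ipomset E A} (hP : StepLetter P) (hQ : StepLetter Q)
    (h : ¬ sameType P Q) :
    ¬ P.IsIdentity ∧ ¬ Q.IsIdentity ∧
      ((P.Starter ∧ Q.Terminator) ∨ (P.Terminator ∧ Q.Starter)) := by
  have hPid : ¬ P.IsIdentity := fun hid => by
    rcases hQ with h' | h'
    · exact h (Or.inl ⟨⟨hid.1, hid.2.2⟩, h'⟩)
    · exact h (Or.inr ⟨⟨hid.1, hid.2.1⟩, h'⟩)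
  have hQid : ¬ Q.IsIdentity := fun hid => by
    rcases hP with h' | h'
    · exact h (Or.inl ⟨h', ⟨hid.1, hid.2.2⟩⟩)
    · exact h (Or.inr ⟨h', ⟨hid.1, hid.2.1⟩⟩)
  refine ⟨hPid, hQid, ?_⟩
  rcases hP with h1 | h1 <;> rcases hQ with h2 | h2
  · exact absurd (Or.inl ⟨h1, h2⟩) h
  · exact Or.inl ⟨h1, h2⟩
  · exact Or.inr ⟨h1, h2⟩
  · exact absurd (Or.inr ⟨h1, h2⟩) h

theorem sparse_of_nopair : ∀ w : List (Ipomset E A), Coherent w →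
    w.Chain' (fun P Q => ¬ sameType P Q) → w ≠ [] → SparseWord w
  | [], _, _, hne => absurd rfl hne
  | [P], hco, _, _ => by
    by_cases h : P.IsIdentity
    · exact Or.inl ⟨P, rfl, h⟩
    · refine Or.inr ⟨?_, List.isChain_singleton P⟩
      intro Q hQ
      rw [List.mem_singleton] at hQ
      subst hQ
      exact ⟨hco.1 Q (by simp), h⟩
  | P :: Q :: w, hco, hch, _ => by
    have hPQ := (List.isChain_cons_cons.1 hch).1
    have hpair := not_id_pair (hco.1 P (by simp)) (hco.1 Q (by simp)) hPQ
    have hrest := sparse_of_nopair (Q :: w) (coherent_tail hco)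
      (List.isChain_cons_cons.1 hch).2 (by simp)
    rcases hrest with ⟨X, hX, hXid⟩ | ⟨hmem, hch2⟩
    · have hQX : Q = X := by injection hX
      exact absurd (hQX ▸ hXid) hpair.2.1
    · refine Or.inr ⟨?_, ?_⟩
      · intro X hX
        rcases List.mem_cons.1 hX with rfl | hX
        · exact ⟨hco.1 X (by simp), hpair.1⟩
        · exact hmem X hX
      · exact List.isChain_cons_cons.2 ⟨hpair.2.2, hch2⟩

theorem exists_sparse : ∀ (n : ℕ) (w : List (Ipomset E A)), w.length ≤ n → Coherent w →
    w ≠ [] → ∃ s, SparseWord s ∧ Coherent s ∧ StepEquiv w s := by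
  intro n
  induction n with
  | zero =>
    intro w hlen hco hne
    rw [List.length_eq_zero_iff.1 (Nat.le_zero.1 hlen)] at hne
    exact absurd rfl hne
  | succ n ih =>
    intro w hlen hco hne
    rcases split_or_chain sameType w with ⟨u, P, Q, v, rfl, hsame⟩ | hch
    · have hlink : ClIso P.tgtIface Q.srcIface :=
        chain'_middle (R := fun X Y : Ipomset E A => ClIso X.tgtIface Y.srcIface) hco.2
      obtain ⟨R, hglue, hRtype, h1, h2⟩ :
          ∃ R, IsGluing P Q R ∧ StepLetter R ∧ ClIso P.srcIface R.srcIface ∧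
            ClIso R.tgtIface Q.tgtIface := by
        rcases hsame with ⟨hPs, hQs⟩ | ⟨hPt, hQt⟩
        · obtain ⟨R, hg, hRs, hc1, hc2⟩ := glue_starters hPs hQs hlink
          exact ⟨R, hg, Or.inl hRs, hc1, by rw [hc2]; exact clIso_refl _⟩
        · obtain ⟨R, hg, hRt, hc1, hc2⟩ := glue_terminators hPt hQt hlink
          exact ⟨R, hg, Or.inr hRt, by rw [hc1]; exact clIso_refl _, hc2⟩
      have hco' : Coherent (u ++ R :: v) := coherent_glue hco hRtype h1 h2
      have hlen' : (u ++ R :: v).length ≤ n := by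
        simp only [List.length_append, List.length_cons] at hlen ⊢
        omega
      obtain ⟨s, hs1, hs2, hs3⟩ := ih (u ++ R :: v) hlen' hco' (by simp)
      exact ⟨s, hs1, hs2, (StepEquiv.glue u v P Q R hco hsame hglue).trans hs3⟩
    · exact ⟨w, sparse_of_nopair w hco hch hne, hco, StepEquiv.refl w⟩

theorem alt_chain : ∀ s : List (Ipomset E A), (∀ P ∈ s, StepLetter P ∧ ¬ P.IsIdentity) →
    s.Chain' (fun P Q => (P.Starter ∧ Q.Terminator) ∨ (P.Terminator ∧ Q.Starter)) →
    (s.map encode).Chain' fun p q => (isS p && isS q) = false ∧ (isT p && isT q) = false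
  | [], _, _ => List.isChain_nil
  | [P], _, _ => by simp [List.Chain']
  | P :: Q :: s, hmem, hch => by
    have h1 := (List.isChain_cons_cons.1 hch).1
    have hdP := stepLetter_discrete (hmem P (by simp)).1
    have hdQ := stepLetter_discrete (hmem Q (by simp)).1
    have hPn : isIdL (encode P) = false := by
      cases h : isIdL (encode P)
      · rfl
      · exact absurd ((isIdL_encode hdP).1 h) (hmem P (by simp)).2
    have hQn : isIdL (encode Q) = false := by
      cases h : isIdL (encode Q)
      · rfl
      · exact absurd ((isIdL_encode hdQ).1 h) (hmem Q (by simp)).2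
    have hcond : (isS (encode P) && isS (encode Q)) = false ∧
        (isT (encode P) && isT (encode Q)) = false := by
      rcases h1 with ⟨hPs, hQt⟩ | ⟨hPt, hQs⟩
      · exact ⟨by rw [isS_false_of (encode_isT hQt) hQn, Bool.and_false],
          by rw [isT_false_of (encode_isS hPs) hPn, Bool.false_and]⟩
      · exact ⟨by rw [isS_false_of (encode_isT hPt) hPn, Bool.false_and],
          by rw [isT_false_of (encode_isS hQs) hQn, Bool.and_false]⟩
    simp only [List.map_cons]
    refine List.isChain_cons_cons.2 ⟨hcond, ?_⟩
    have := alt_chain (Q :: s) (fun X hX => hmem X (List.mem_cons_of_mem _ hX))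
      (List.isChain_cons_cons.1 hch).2
    simpa [List.Chain'] using this

theorem NF_sparse {s : List (Ipomset E A)} (hs : SparseWord s) (hco : Coherent s)
    (hne : s ≠ []) : NF (s.map encode) = s.map encode := by
  classical
  rcases hs with ⟨P, rfl, hP⟩ | ⟨hmem, hch⟩
  · have hid : isIdL (encode P) = true := (isIdL_encode hP.1).2 hP
    have hfil : (([P].map encode).filter fun l => !(isIdL l)) = [] := by
      simp only [List.map_singleton]
      rw [List.filter_cons_of_neg (by simp [hid]), List.filter_nil]
    rw [NF, if_pos hfil]
    rfl
  · have hfil : ((s.map encode).filter fun l => !(isIdL l)) = s.map encode := by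
      rw [List.filter_eq_self]
      intro l hl
      rw [List.mem_map] at hl
      obtain ⟨X, hXs, rfl⟩ := hl
      have hd := stepLetter_discrete (hmem X hXs).1
      have hXn : isIdL (encode X) = false := by
        cases h : isIdL (encode X)
        · rfl
        · exact absurd ((isIdL_encode hd).1 h) (hmem X hXs).2
      simp [hXn]
    rw [NF, hfil, if_neg (by simpa using hne)]
    exact mr_alt _ (alt_chain s hmem hch)

theorem sorted_evord_index {P : Ipomset E A} (hd : P.Discrete) {x y : E}
    (hx : x ∈ sortedEvents P) (hy : y ∈ sortedEvents P) :
    P.evord x y ↔ (sortedEvents P).idxOf x < (sortedEvents P).idxOf y := by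
  set l := sortedEvents P with hl
  have hspec := sortedEvents_spec hd
  have hpw := List.pairwise_iff_getElem.1 hspec.2.2
  have hix : l.idxOf x < l.length := List.idxOf_lt_length_iff.2 hx
  have hiy : l.idxOf y < l.length := List.idxOf_lt_length_iff.2 hy
  have hgx : l[l.idxOf x] = x := List.getElem_idxOf hix
  have hgy : l[l.idxOf y] = y := List.getElem_idxOf hiy
  constructor
  · intro h
    by_contra hlt
    push_neg at hlt
    rcases lt_or_eq_of_le hlt with h2 | h2
    · have := hpw _ _ hiy hix h2
      rw [hgx, hgy] at this
      exact P.evord_irrefl x (P.evord_trans h this)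
    · have hxy : y = x := by
        rw [← hgx, ← hgy]
        congr 1
      rw [hxy] at h
      exact P.evord_irrefl x h
  · intro h
    have := hpw _ _ hix hiy h
    rw [hgx, hgy] at this
    exact this

theorem ipoIso_of_encode_eq {P Q : Ipomset E A} (hP : P.Discrete) (hQ : Q.Discrete)
    (h : encode P = encode Q) : IpoIso P Q := by
  classical
  set lP := sortedEvents P with hlP
  set lQ := sortedEvents Q with hlQ
  have hspecP := sortedEvents_spec hP
  have hspecQ := sortedEvents_spec hQ
  have hlen : lP.length = lQ.length := by
    have := congrArg List.length h
    simpa [encode, ← hlP, ← hlQ] using this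
  have hdata : ∀ (i : ℕ) (hi : i < lP.length),
      (P.lab (lP[i]'hi), decide (lP[i]'hi ∈ P.src), decide (lP[i]'hi ∈ P.tgt)) =
      (Q.lab (lQ[i]'(hlen ▸ hi)), decide (lQ[i]'(hlen ▸ hi) ∈ Q.src),
        decide (lQ[i]'(hlen ▸ hi) ∈ Q.tgt)) := by
    intro i hi
    have h1 : (encode P)[i]'(by simpa [encode, ← hlP] using hi) =
        (encode Q)[i]'(by simpa [encode, ← hlQ] using hlen ▸ hi) := by
      simp only [h]
    simpa [encode, ← hlP, ← hlQ, List.getElem_map] using h1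
  set f : E → E := fun x => lQ.getD (lP.idxOf x) x with hfdef
  have hfx : ∀ x ∈ lP, ∀ (hi : lP.idxOf x < lQ.length), f x = lQ[lP.idxOf x]'hi := by
    intro x hx hi
    rw [hfdef]
    simp only
    rw [List.getD_eq_getElem lQ x hi]
  have hmemP : ∀ x, x ∈ P.events ↔ x ∈ lP := fun x => (mem_sortedEvents hP).symm
  have hmemQ : ∀ x, x ∈ Q.events ↔ x ∈ lQ := fun x => (mem_sortedEvents hQ).symm
  have hmaps : ∀ x ∈ P.events, f x ∈ Q.events := by
    intro x hx
    have hx' := (hmemP x).1 hx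
    have hi : lP.idxOf x < lQ.length := hlen ▸ List.idxOf_lt_length_iff.2 hx'
    rw [hfx x hx' hi]
    exact (hmemQ _).2 (List.getElem_mem _)
  have hidx : ∀ x ∈ lP, ∀ (hi : lP.idxOf x < lQ.length), lQ.idxOf (f x) = lP.idxOf x := by
    intro x hx hi
    rw [hfx x hx hi]
    exact List.Nodup.idxOf_getElem hspecQ.2.1 _ _
  refine ⟨f, ⟨hmaps, ?_, ?_, ?_, ?_, ?_, ?_, ?_⟩⟩
  · intro x hx y hy hxy
    have hx' := (hmemP x).1 hx
    have hy' := (hmemP y).1 hy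
    have hix : lP.idxOf x < lQ.length := hlen ▸ List.idxOf_lt_length_iff.2 hx'
    have hiy : lP.idxOf y < lQ.length := hlen ▸ List.idxOf_lt_length_iff.2 hy'
    rw [hfx x hx' hix, hfx y hy' hiy] at hxy
    have hieq : lP.idxOf x = lP.idxOf y := (hspecQ.2.1.getElem_inj_iff).1 hxy
    have e1 : lP[lP.idxOf x]'(List.idxOf_lt_length_iff.2 hx') = x := List.getElem_idxOf _
    have e2 : lP[lP.idxOf y]'(List.idxOf_lt_length_iff.2 hy') = y := List.getElem_idxOf _
    rw [← e1, ← e2]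
    congr 1
  · intro y hy
    have hy' := (hmemQ y).1 hy
    obtain ⟨j, hj, rfl⟩ := List.getElem_of_mem hy'
    have hjP : j < lP.length := hlen ▸ hj
    refine ⟨lP[j]'hjP, (hmemP _).2 (List.getElem_mem _), ?_⟩
    have hmem : lP[j]'hjP ∈ lP := List.getElem_mem _
    have hidxj : lP.idxOf (lP[j]'hjP) = j := List.Nodup.idxOf_getElem hspecP.2.1 _ _
    have hi : lP.idxOf (lP[j]'hjP) < lQ.length := by rw [hidxj]; exact hj
    rw [hfx _ hmem hi]
    congr 1
  · intro x hx
    have hx' := (hmemP x).1 hx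
    have hix := List.idxOf_lt_length_iff.2 hx'
    have hixQ : lP.idxOf x < lQ.length := hlen ▸ hix
    have hd := hdata (lP.idxOf x) hix
    rw [List.getElem_idxOf hix] at hd
    have h2 := congrArg (fun p => p.2.1) hd
    simp only at h2
    rw [hfx x hx' hixQ]
    exact decide_eq_decide.1 h2
  · intro x hx
    have hx' := (hmemP x).1 hx
    have hix := List.idxOf_lt_length_iff.2 hx'
    have hixQ : lP.idxOf x < lQ.length := hlen ▸ hix
    have hd := hdata (lP.idxOf x) hix
    rw [List.getElem_idxOf hix] at hd
    have h2 := congrArg (fun p => p.2.2) hd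
    simp only at h2
    rw [hfx x hx' hixQ]
    exact decide_eq_decide.1 h2
  · intro x hx
    have hx' := (hmemP x).1 hx
    have hix := List.idxOf_lt_length_iff.2 hx'
    have hixQ : lP.idxOf x < lQ.length := hlen ▸ hix
    have hd := hdata (lP.idxOf x) hix
    rw [List.getElem_idxOf hix] at hd
    have h2 := congrArg (fun p => p.1) hd
    simp only at h2
    rw [hfx x hx' hixQ]
    exact h2.symm
  · intro x hx y hy
    exact ⟨fun h' => absurd h' (hQ _ _), fun h' => absurd h' (hP _ _)⟩
  · intro x hx y hy _ _
    have hx' := (hmemP x).1 hx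
    have hy' := (hmemP y).1 hy
    have hixQ : lP.idxOf x < lQ.length := hlen ▸ List.idxOf_lt_length_iff.2 hx'
    have hiyQ : lP.idxOf y < lQ.length := hlen ▸ List.idxOf_lt_length_iff.2 hy'
    have hmx : f x ∈ lQ := by rw [hfx x hx' hixQ]; exact List.getElem_mem _
    have hmy : f y ∈ lQ := by rw [hfx y hy' hiyQ]; exact List.getElem_mem _
    rw [sorted_evord_index hP hx' hy', sorted_evord_index hQ hmx hmy,
      hidx x hx' hixQ, hidx y hy' hiyQ]

omit [DecidableEq E] in
theorem append_cons_ne_nil (u v : List (Ipomset E A)) (P : Ipomset E A) :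
    u ++ P :: v ≠ [] := by simp

theorem stepEquiv_ne {w₁ w₂ : List (Ipomset E A)} (h : StepEquiv w₁ w₂) :
    w₁ = [] ↔ w₂ = [] := by
  induction h with
  | glue u v P Q R _ _ _ => exact iff_of_false (by simp) (by simp)
  | ident u v P _ _ hne => exact iff_of_false (by simp) hne
  | iso u v P Q _ _ => exact iff_of_false (by simp) (by simp)
  | refl w => exact Iff.rfl
  | symm _ ih => exact ih.symm
  | trans _ _ ih1 ih2 => exact ih1.trans ih2

end Exist

end SparseAux


/-- Every step sequence (every `~`-class of coherent words of
starters and terminators) contains exactly one sparse representative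
(unique up to letterwise isomorphism, since words are words of isomorphism
classes). -/
theorem sparse_representative_unique [DecidableEq E] [Infinite E]
    (w : List (Ipomset E A)) (hw : Coherent w) (hne : w ≠ []) :
    ∃ s : List (Ipomset E A), SparseWord s ∧ Coherent s ∧ StepEquiv w s ∧
      ∀ s' : List (Ipomset E A), SparseWord s' → Coherent s' → StepEquiv w s' →
        s'.length = s.length ∧
        ∀ (i : ℕ) (h1 : i < s.length) (h2 : i < s'.length),
          IpoIso (s.get ⟨i, h1⟩) (s'.get ⟨i, h2⟩) := by
  classical
  obtain ⟨s, hs1, hs2, hs3⟩ := SparseAux.exists_sparse w.length w le_rfl hw hne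
  refine ⟨s, hs1, hs2, hs3, ?_⟩
  intro s' hs1' hs2' hs3'
  have hnes : s ≠ [] := fun hc => hne ((SparseAux.stepEquiv_ne hs3).2 hc)
  have hnes' : s' ≠ [] := fun hc => hne ((SparseAux.stepEquiv_ne hs3').2 hc)
  have h1 : (s.map SparseAux.encode) = s'.map SparseAux.encode := by
    have h2 := (SparseAux.stepEquiv_NF hs3).symm.trans (SparseAux.stepEquiv_NF hs3')
    rwa [SparseAux.NF_sparse hs1 hs2 hnes, SparseAux.NF_sparse hs1' hs2' hnes'] at h2
  have hlen : s'.length = s.length := by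
    have := congrArg List.length h1
    simpa using this.symm
  refine ⟨hlen, ?_⟩
  intro i hi1 hi2
  have hd1 : (s.get ⟨i, hi1⟩).Discrete :=
    SparseAux.stepLetter_discrete (hs2.1 _ (s.get_mem _))
  have hd2 : (s'.get ⟨i, hi2⟩).Discrete :=
    SparseAux.stepLetter_discrete (hs2'.1 _ (s'.get_mem _))
  apply SparseAux.ipoIso_of_encode_eq hd1 hd2
  have h3 : (s.map SparseAux.encode)[i]'(by simpa using hi1) =
      (s'.map SparseAux.encode)[i]'(by simpa using hi2) := by
    simp only [h1]
  simpa [List.getElem_map, List.get_eq_getElem] using h3
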